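/- arXiv:1805.08840 — 3 statements merged into one kernel-verified Lean document; each statement's English description precedes it below -/
import Mathlib

section
/- The plane can be tiled by infinitely many pairwise noncongruent squares whose side lengths are bounded from below by a positive constant: there exists an infinite family of squares in ℝ² with pairwise disjoint interiors whose union is all of ℝ², such that no two of the squares are congruent and all side lengths are at least some fixed positive constant. -/
noncomputable section

abbrev Pt : Type := EuclideanSpace ℝ (Fin 2)

structure Sq : Type where
  A : Pt
  B : Pt
  C : Pt
  D : Pt
  side_pos : 0 < dist A B
  eqAB : dist A B = dist B C
  eqBC : dist B C = dist C D
  eqCD : dist C D = dist D A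
  diagAC : dist A C = Real.sqrt 2 * dist A B
  diagBD : dist B D = Real.sqrt 2 * dist A B

def Sq.set (S : Sq) : Set Pt := convexHull ℝ {S.A, S.B, S.C, S.D}

def Sq.side (S : Sq) : ℝ := dist S.A S.B

def SetCongruent (s t : Set Pt) : Prop := ∃ f : Pt ≃ᵢ Pt, f '' s = t

-- auxiliary
def pt (a b : ℝ) : Pt := WithLp.toLp 2 ![a, b]

@[simp] lemma pt_apply_zero (a b : ℝ) : pt a b 0 = a := rfl
@[simp] lemma pt_apply_one (a b : ℝ) : pt a b 1 = b := rfl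

lemma dist_pt (a b c d : ℝ) :
    dist (pt a b) (pt c d) = Real.sqrt ((a - c) ^ 2 + (b - d) ^ 2) := by
  rw [EuclideanSpace.dist_eq]
  simp [Fin.sum_univ_two, Real.dist_eq, sq_abs]

lemma dist_pt_same_y (a b c : ℝ) (h : 0 ≤ c - a) : dist (pt a b) (pt c b) = c - a := by
  rw [dist_pt]
  have : (a - c) ^ 2 + (b - b) ^ 2 = (c - a) ^ 2 := by ring
  rw [this, Real.sqrt_sq h]

def mkSq (x y s : ℝ) (hs : 0 < s) : Sq where
  A := pt x y
  B := pt (x + s) y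
  C := pt (x + s) (y + s)
  D := pt x (y + s)
  side_pos := by
    have : dist (pt x y) (pt (x + s) y) = (x + s) - x := dist_pt_same_y _ _ _ (by linarith)
    rw [this]; linarith
  eqAB := by rw [dist_pt, dist_pt]; ring_nf
  eqBC := by rw [dist_pt, dist_pt]; ring_nf
  eqCD := by rw [dist_pt, dist_pt]; ring_nf
  diagAC := by
    rw [dist_pt, dist_pt]
    have h1 : (x - (x + s)) ^ 2 + (y - (y + s)) ^ 2 = 2 * s ^ 2 := by ring
    have h2 : (x - (x + s)) ^ 2 + (y - y) ^ 2 = s ^ 2 := by ring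
    rw [h1, h2, Real.sqrt_sq hs.le, Real.sqrt_mul (by norm_num : (0:ℝ) ≤ 2), Real.sqrt_sq hs.le]
  diagBD := by
    rw [dist_pt, dist_pt]
    have h1 : (x + s - x) ^ 2 + (y - (y + s)) ^ 2 = 2 * s ^ 2 := by ring
    have h2 : (x - (x + s)) ^ 2 + (y - y) ^ 2 = s ^ 2 := by ring
    rw [h1, h2, Real.sqrt_mul (by norm_num : (0:ℝ) ≤ 2), Real.sqrt_sq hs.le]

@[simp] lemma mkSq_side (x y s : ℝ) (hs : 0 < s) : (mkSq x y s hs).side = s := by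
  show dist (pt x y) (pt (x + s) y) = s
  rw [dist_pt_same_y _ _ _ (by linarith)]; ring

def box (x y s : ℝ) : Set Pt :=
  {p | x ≤ p 0 ∧ p 0 ≤ x + s ∧ y ≤ p 1 ∧ p 1 ≤ y + s}

lemma cc_le {a b u v c : ℝ} (ha : 0 ≤ a) (hb : 0 ≤ b) (hab : a + b = 1)
    (hu : u ≤ c) (hv : v ≤ c) : a * u + b * v ≤ c := by
  have hx : a * c + b * c = c := by rw [← add_mul, hab, one_mul]
  nlinarith [mul_le_mul_of_nonneg_left hu ha, mul_le_mul_of_nonneg_left hv hb]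

lemma cc_ge {a b u v c : ℝ} (ha : 0 ≤ a) (hb : 0 ≤ b) (hab : a + b = 1)
    (hu : c ≤ u) (hv : c ≤ v) : c ≤ a * u + b * v := by
  have hx : a * c + b * c = c := by rw [← add_mul, hab, one_mul]
  nlinarith [mul_le_mul_of_nonneg_left hu ha, mul_le_mul_of_nonneg_left hv hb]

lemma convex_box (x y s : ℝ) : Convex ℝ (box x y s) := by
  intro p hp q hq a b ha hb hab
  obtain ⟨h1, h2, h3, h4⟩ := hp
  obtain ⟨h1', h2', h3', h4'⟩ := hq
  have e0 : (a • p + b • q) 0 = a * p 0 + b * q 0 := rfl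
  have e1 : (a • p + b • q) 1 = a * p 1 + b * q 1 := rfl
  refine ⟨?_, ?_, ?_, ?_⟩
  · rw [e0]; exact cc_ge ha hb hab h1 h1'
  · rw [e0]; exact cc_le ha hb hab h2 h2'
  · rw [e1]; exact cc_ge ha hb hab h3 h3'
  · rw [e1]; exact cc_le ha hb hab h4 h4' 


section hull

lemma smul_add_apply (a b : ℝ) (p q : Pt) (i : Fin 2) :
    (a • p + b • q) i = a * p i + b * q i := rfl

lemma mem_seg (a b c d t : ℝ) (h0 : 0 ≤ t) (h1 : t ≤ 1) :
    pt ((1 - t) * a + t * c) ((1 - t) * b + t * d) ∈ segment ℝ (pt a b) (pt c d) := by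
  refine ⟨1 - t, t, by linarith, h0, by ring, ?_⟩
  apply PiLp.ext; intro i
  fin_cases i <;> simp [smul_add_apply]

lemma mkSq_set (x y s : ℝ) (hs : 0 < s) : (mkSq x y s hs).set = box x y s := by
  apply le_antisymm
  · apply convexHull_min _ (convex_box x y s)
    intro p hp
    have hxs : x ≤ x + s := by linarith
    have hys : y ≤ y + s := by linarith
    rcases hp with h | h | h | h <;> subst h <;>
      refine ⟨?_, ?_, ?_, ?_⟩ <;> simp [mkSq] <;> linarith
  · intro p hp
    obtain ⟨h1, h2, h3, h4⟩ := hp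
    set t : ℝ := (p 0 - x) / s with ht
    set u : ℝ := (p 1 - y) / s with hu
    have hsne : s ≠ 0 := ne_of_gt hs
    have ht0 : 0 ≤ t := div_nonneg (by linarith) hs.le
    have ht1 : t ≤ 1 := (div_le_one hs).2 (by linarith)
    have hu0 : 0 ≤ u := div_nonneg (by linarith) hs.le
    have hu1 : u ≤ 1 := (div_le_one hs).2 (by linarith)
    have hts : t * s = p 0 - x := div_mul_cancel₀ _ hsne
    have hus : u * s = p 1 - y := div_mul_cancel₀ _ hsne
    have hP : (1 - t) * x + t * (x + s) = p 0 := by nlinarith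
    have hconv : Convex ℝ (mkSq x y s hs).set := convex_convexHull ℝ _
    have hA : (mkSq x y s hs).A ∈ (mkSq x y s hs).set := subset_convexHull ℝ _ (by simp)
    have hB : (mkSq x y s hs).B ∈ (mkSq x y s hs).set := subset_convexHull ℝ _ (by simp)
    have hC : (mkSq x y s hs).C ∈ (mkSq x y s hs).set := subset_convexHull ℝ _ (by simp)
    have hD : (mkSq x y s hs).D ∈ (mkSq x y s hs).set := subset_convexHull ℝ _ (by simp)
    have hPm : pt (p 0) y ∈ (mkSq x y s hs).set := by
      have := mem_seg x y (x + s) y t ht0 ht1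
      rw [hP] at this
      have hy : (1 - t) * y + t * y = y := by ring
      rw [hy] at this
      exact hconv.segment_subset hA hB this
    have hQm : pt (p 0) (y + s) ∈ (mkSq x y s hs).set := by
      have := mem_seg x (y + s) (x + s) (y + s) t ht0 ht1
      rw [hP] at this
      have hy : (1 - t) * (y + s) + t * (y + s) = y + s := by ring
      rw [hy] at this
      exact hconv.segment_subset hD hC this
    have hfin := mem_seg (p 0) y (p 0) (y + s) u hu0 hu1
    have hx0 : (1 - u) * p 0 + u * p 0 = p 0 := by ring
    have hy0 : (1 - u) * y + u * (y + s) = p 1 := by nlinarith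
    rw [hx0, hy0] at hfin
    have : pt (p 0) (p 1) = p := by
      apply PiLp.ext; intro i; fin_cases i <;> rfl
    rw [this] at hfin
    exact hconv.segment_subset hPm hQm hfin

end hull

section diam

lemma dist_coord (p q : Pt) :
    dist p q = Real.sqrt ((p 0 - q 0) ^ 2 + (p 1 - q 1) ^ 2) := by
  rw [EuclideanSpace.dist_eq]
  simp [Fin.sum_univ_two, Real.dist_eq, sq_abs]

lemma diam_mkSq (x y s : ℝ) (hs : 0 < s) :
    Metric.diam (mkSq x y s hs).set = Real.sqrt 2 * s := by
  have hsqrt2 : (0:ℝ) ≤ Real.sqrt 2 := Real.sqrt_nonneg 2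
  apply le_antisymm
  · apply Metric.diam_le_of_forall_dist_le (by positivity)
    intro p hp q hq
    rw [mkSq_set] at hp hq
    obtain ⟨a1, a2, a3, a4⟩ := hp
    obtain ⟨b1, b2, b3, b4⟩ := hq
    rw [dist_coord]
    have h2 : (p 0 - q 0) ^ 2 + (p 1 - q 1) ^ 2 ≤ 2 * s ^ 2 := by nlinarith
    calc Real.sqrt ((p 0 - q 0) ^ 2 + (p 1 - q 1) ^ 2) ≤ Real.sqrt (2 * s ^ 2) :=
          Real.sqrt_le_sqrt h2
      _ = Real.sqrt 2 * s := by
          rw [Real.sqrt_mul (by norm_num : (0:ℝ) ≤ 2), Real.sqrt_sq hs.le]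
  · have hbd : Bornology.IsBounded (mkSq x y s hs).set := by
      rw [Sq.set]
      exact isBounded_convexHull.2 (Set.toFinite _).isBounded
    have hA : (mkSq x y s hs).A ∈ (mkSq x y s hs).set := subset_convexHull ℝ _ (by simp)
    have hC : (mkSq x y s hs).C ∈ (mkSq x y s hs).set := subset_convexHull ℝ _ (by simp)
    have := Metric.dist_le_diam_of_mem hbd hA hC
    rwa [(mkSq x y s hs).diagAC, show dist (mkSq x y s hs).A (mkSq x y s hs).B = s from
      mkSq_side x y s hs] at this

lemma dist_add_pt (p : Pt) (c d : ℝ) :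
    dist (p + pt c d) p = Real.sqrt (c ^ 2 + d ^ 2) := by
  rw [dist_coord]
  have h0 : (p + pt c d) 0 = p 0 + c := rfl
  have h1 : (p + pt c d) 1 = p 1 + d := rfl
  rw [h0, h1]
  ring_nf

def openBox (x y s : ℝ) : Set Pt :=
  {p | x < p 0 ∧ p 0 < x + s ∧ y < p 1 ∧ p 1 < y + s}

lemma interior_box_subset (x y s : ℝ) :
    interior (box x y s) ⊆ openBox x y s := by
  intro p hp
  rw [mem_interior_iff_mem_nhds, Metric.mem_nhds_iff] at hp
  obtain ⟨ε, hε, hball⟩ := hp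
  have key : ∀ c d : ℝ, Real.sqrt (c ^ 2 + d ^ 2) < ε → p + pt c d ∈ box x y s := by
    intro c d h
    apply hball
    rw [Metric.mem_ball, dist_add_pt]
    exact h
  have hd : ∀ c : ℝ, |c| < ε → Real.sqrt (c ^ 2 + 0 ^ 2) < ε ∧ Real.sqrt (0 ^ 2 + c ^ 2) < ε := by
    intro c hc
    constructor
    · rw [show c ^ 2 + 0 ^ 2 = c ^ 2 by ring, Real.sqrt_sq_eq_abs]; exact hc
    · rw [show (0:ℝ) ^ 2 + c ^ 2 = c ^ 2 by ring, Real.sqrt_sq_eq_abs]; exact hc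
  have hεabs : |ε / 2| < ε := by rw [abs_of_pos (by linarith)]; linarith
  have hεabs' : |-(ε / 2)| < ε := by rw [abs_neg, abs_of_pos (by linarith)]; linarith
  have m1 := key (ε/2) 0 ((hd _ hεabs).1)
  have m2 := key (-(ε/2)) 0 ((hd _ hεabs').1)
  have m3 := key 0 (ε/2) ((hd _ hεabs).2)
  have m4 := key 0 (-(ε/2)) ((hd _ hεabs').2)
  have e1 : ∀ c d : ℝ, (p + pt c d) 0 = p 0 + c := fun _ _ => rfl
  have e2 : ∀ c d : ℝ, (p + pt c d) 1 = p 1 + d := fun _ _ => rfl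
  obtain ⟨a1, a2, a3, a4⟩ := m1
  obtain ⟨b1, b2, b3, b4⟩ := m2
  obtain ⟨c1, c2, c3, c4⟩ := m3
  obtain ⟨d1, d2, d3, d4⟩ := m4
  rw [e1, e2] at *
  refine ⟨by linarith, by linarith, by linarith, by linarith⟩

lemma boxes_disj {x1 y1 s1 x2 y2 s2 : ℝ}
    (h : x1 + s1 ≤ x2 ∨ x2 + s2 ≤ x1 ∨ y1 + s1 ≤ y2 ∨ y2 + s2 ≤ y1) :
    Disjoint (interior (box x1 y1 s1)) (interior (box x2 y2 s2)) := by
  rw [Set.disjoint_left]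
  intro p hp1 hp2
  have h1 := interior_box_subset _ _ _ hp1
  have h2 := interior_box_subset _ _ _ hp2
  obtain ⟨a1, a2, a3, a4⟩ := h1
  obtain ⟨b1, b2, b3, b4⟩ := h2
  rcases h with h | h | h | h <;> linarith

end diam

section congr

lemma side_eq_of_congruent {x y s x' y' s' : ℝ} {hs : 0 < s} {hs' : 0 < s'}
    (h : SetCongruent (mkSq x y s hs).set (mkSq x' y' s' hs').set) : s = s' := by
  obtain ⟨f, hf⟩ := h
  have hd : Metric.diam (mkSq x y s hs).set = Metric.diam (mkSq x' y' s' hs').set := by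
    rw [← hf, f.diam_image]
  rw [diam_mkSq, diam_mkSq] at hd
  have h2 : Real.sqrt 2 ≠ 0 := by positivity
  exact mul_left_cancel₀ h2 hd

end congr

section data

/-- seed squares of the 33 × 32 Moroń perfect squared rectangle -/
def sd : ℕ → ℝ × ℝ × ℝ
  | 0 => (0, 14, 18)
  | 1 => (18, 17, 15)
  | 2 => (0, 0, 14)
  | 3 => (14, 0, 10)
  | 4 => (24, 0, 9)
  | 5 => (25, 9, 8)
  | 6 => (18, 10, 7)
  | 7 => (14, 10, 4)
  | _ => (24, 9, 1)

/-- expanding rectangles: (left, right, bottom, top) -/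
def rect : ℕ → ℝ × ℝ × ℝ × ℝ
  | 0 => (0, 33, 0, 32)
  | n + 1 =>
    let l := (rect n).1
    let r := (rect n).2.1
    let b := (rect n).2.2.1
    let t := (rect n).2.2.2
    if n % 4 = 0 then (l, r + (t - b), b, t)
    else if n % 4 = 1 then (l, r, b, t + (r - l))
    else if n % 4 = 2 then (l - (t - b), r, b, t)
    else (l, r, b - (r - l), t)

def eL (n : ℕ) : ℝ := (rect n).1
def eR (n : ℕ) : ℝ := (rect n).2.1
def eB (n : ℕ) : ℝ := (rect n).2.2.1
def eT (n : ℕ) : ℝ := (rect n).2.2.2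

/-- spiral square n: (x, y, side) -/
def spir (n : ℕ) : ℝ × ℝ × ℝ :=
  if n % 4 = 0 then (eR n, eB n, eT n - eB n)
  else if n % 4 = 1 then (eL n, eT n, eR n - eL n)
  else if n % 4 = 2 then (eL n - (eT n - eB n), eB n, eT n - eB n)
  else (eL n, eB n - (eR n - eL n), eR n - eL n)

lemma dims : ∀ n, 32 ≤ eR n - eL n ∧ 32 ≤ eT n - eB n := by
  intro n
  induction n with
  | zero => norm_num [eL, eR, eB, eT, rect]
  | succ n ih =>
    have h4 : n % 4 = 0 ∨ n % 4 = 1 ∨ n % 4 = 2 ∨ n % 4 = 3 := by omega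
    simp only [eL, eR, eB, eT] at ih ⊢
    rcases h4 with h | h | h | h <;>
      simp only [rect, h] <;> norm_num <;>
      constructor <;> linarith [ih.1, ih.2]

lemma spir_side_eq (n : ℕ) :
    (spir n).2.2 = if n % 2 = 0 then eT n - eB n else eR n - eL n := by
  have h4 : n % 4 = 0 ∨ n % 4 = 1 ∨ n % 4 = 2 ∨ n % 4 = 3 := by omega
  rcases h4 with h | h | h | h <;>
    [ (have h2 : n % 2 = 0 := by omega);
      (have h2 : n % 2 = 1 := by omega);
      (have h2 : n % 2 = 0 := by omega);
      (have h2 : n % 2 = 1 := by omega)] <;>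
    simp [spir, h, h2]

lemma spir_side_pos (n : ℕ) : 32 ≤ (spir n).2.2 := by
  rw [spir_side_eq]
  rcases Nat.even_or_odd n with h | h
  · simp [Nat.even_iff.mp h, (dims n).2]
  · simp [Nat.odd_iff.mp h, (dims n).1]

lemma spir_side_mono (n : ℕ) : (spir n).2.2 + 32 ≤ (spir (n + 1)).2.2 := by
  have h4 : n % 4 = 0 ∨ n % 4 = 1 ∨ n % 4 = 2 ∨ n % 4 = 3 := by omega
  have hd := dims n
  simp only [eL, eR, eB, eT] at hd
  rcases h4 with h | h | h | h
  · have h2 : n % 2 = 0 := by omega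
    have h2' : (n + 1) % 2 = 1 := by omega
    rw [spir_side_eq, spir_side_eq, h2, h2']
    simp only [eL, eR, eB, eT, rect, h]
    norm_num
    linarith [hd.1, hd.2]
  · have h2 : n % 2 = 1 := by omega
    have h2' : (n + 1) % 2 = 0 := by omega
    rw [spir_side_eq, spir_side_eq, h2, h2']
    simp only [eL, eR, eB, eT, rect, h]
    norm_num
    linarith [hd.1, hd.2]
  · have h2 : n % 2 = 0 := by omega
    have h2' : (n + 1) % 2 = 1 := by omega
    rw [spir_side_eq, spir_side_eq, h2, h2']
    simp only [eL, eR, eB, eT, rect, h]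
    norm_num
    linarith [hd.1, hd.2]
  · have h2 : n % 2 = 1 := by omega
    have h2' : (n + 1) % 2 = 0 := by omega
    rw [spir_side_eq, spir_side_eq, h2, h2']
    simp only [eL, eR, eB, eT, rect, h]
    norm_num
    linarith [hd.1, hd.2]

def rectSet (n : ℕ) : Set Pt :=
  {p | eL n ≤ p 0 ∧ p 0 ≤ eR n ∧ eB n ≤ p 1 ∧ p 1 ≤ eT n}

def spbox (n : ℕ) : Set Pt := box (spir n).1 (spir n).2.1 (spir n).2.2

lemma rect_step (n : ℕ) : rectSet (n + 1) ⊆ rectSet n ∪ spbox n := by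
  have h4 : n % 4 = 0 ∨ n % 4 = 1 ∨ n % 4 = 2 ∨ n % 4 = 3 := by omega
  intro p hp
  have hd := dims n
  simp only [eL, eR, eB, eT] at hd
  rcases h4 with h | h | h | h <;>
    simp only [rectSet, spbox, box, spir, eL, eR, eB, eT, rect, h, Set.mem_setOf_eq,
      Set.mem_union, if_true, if_false] at hp ⊢ <;>
    norm_num at hp ⊢
  · rcases le_total (p 0) ((rect n).2.1) with hc | hc
    · exact Or.inl ⟨by linarith [hp.1], hc, hp.2.2.1, hp.2.2.2⟩
    · exact Or.inr ⟨hc, by linarith [hp.2.1], hp.2.2.1, by linarith [hp.2.2.2]⟩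
  · rcases le_total (p 1) ((rect n).2.2.2) with hc | hc
    · exact Or.inl ⟨hp.1, hp.2.1, hp.2.2.1, hc⟩
    · exact Or.inr ⟨hp.1, by linarith [hp.2.1], hc, by linarith [hp.2.2.2]⟩
  · rcases le_total ((rect n).1) (p 0) with hc | hc
    · exact Or.inl ⟨hc, hp.2.1, hp.2.2.1, hp.2.2.2⟩
    · exact Or.inr ⟨hp.1, by linarith, hp.2.2.1, by linarith [hp.2.2.2]⟩
  · rcases le_total ((rect n).2.2.1) (p 1) with hc | hc
    · exact Or.inl ⟨hp.1, hp.2.1, hc, hp.2.2.2⟩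
    · exact Or.inr ⟨hp.1, hp.2.1, hp.2.2.1, by linarith⟩

lemma rect_mono_succ (n : ℕ) : rectSet n ⊆ rectSet (n + 1) := by
  have h4 : n % 4 = 0 ∨ n % 4 = 1 ∨ n % 4 = 2 ∨ n % 4 = 3 := by omega
  intro p hp
  have hd := dims n
  simp only [eL, eR, eB, eT] at hd
  rcases h4 with h | h | h | h <;>
    simp only [rectSet, eL, eR, eB, eT, rect, h, Set.mem_setOf_eq] at hp ⊢ <;>
    norm_num at hp ⊢ <;>
    exact ⟨by linarith [hp.1], by linarith [hp.2.1], by linarith [hp.2.2.1],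
      by linarith [hp.2.2.2]⟩

lemma spbox_subset (n : ℕ) : spbox n ⊆ rectSet (n + 1) := by
  have h4 : n % 4 = 0 ∨ n % 4 = 1 ∨ n % 4 = 2 ∨ n % 4 = 3 := by omega
  intro p hp
  have hd := dims n
  simp only [eL, eR, eB, eT] at hd
  rcases h4 with h | h | h | h <;>
    simp only [rectSet, spbox, box, spir, eL, eR, eB, eT, rect, h, Set.mem_setOf_eq] at hp ⊢ <;>
    norm_num at hp ⊢ <;>
    exact ⟨by linarith [hp.1], by linarith [hp.2.1], by linarith [hp.2.2.1],
      by linarith [hp.2.2.2]⟩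

lemma spbox_disj_rect (n : ℕ) : ∀ p ∈ interior (spbox n), p ∉ rectSet n := by
  have h4 : n % 4 = 0 ∨ n % 4 = 1 ∨ n % 4 = 2 ∨ n % 4 = 3 := by omega
  intro p hp hr
  have hp' := interior_box_subset _ _ _ hp
  have hd := dims n
  simp only [eL, eR, eB, eT] at hd
  rcases h4 with h | h | h | h <;>
    simp only [rectSet, openBox, spir, eL, eR, eB, eT, h, Set.mem_setOf_eq] at hp' hr <;>
    norm_num at hp' hr <;>
    linarith [hp'.1, hp'.2.1, hp'.2.2.1, hp'.2.2.2, hr.1, hr.2.1, hr.2.2.1, hr.2.2.2]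

end data

section growth

lemma bnd_mono (n : ℕ) :
    eL (n + 1) ≤ eL n ∧ eR n ≤ eR (n + 1) ∧ eB (n + 1) ≤ eB n ∧ eT n ≤ eT (n + 1) := by
  have h4 : n % 4 = 0 ∨ n % 4 = 1 ∨ n % 4 = 2 ∨ n % 4 = 3 := by omega
  have hd := dims n
  simp only [eL, eR, eB, eT] at hd ⊢
  rcases h4 with h | h | h | h <;> simp only [rect, h] <;> norm_num <;>
    linarith [hd.1, hd.2]

lemma step_R {n : ℕ} (h : n % 4 = 0) : eR n + 32 ≤ eR (n + 1) := by
  have hd := dims n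
  simp only [eL, eR, eB, eT] at hd ⊢
  simp only [rect, h]; norm_num; linarith [hd.2]

lemma step_T {n : ℕ} (h : n % 4 = 1) : eT n + 32 ≤ eT (n + 1) := by
  have hd := dims n
  simp only [eL, eR, eB, eT] at hd ⊢
  simp only [rect, h]; norm_num; linarith [hd.1]

lemma step_L {n : ℕ} (h : n % 4 = 2) : eL (n + 1) ≤ eL n - 32 := by
  have hd := dims n
  simp only [eL, eR, eB, eT] at hd ⊢
  simp only [rect, h]; norm_num; linarith [hd.2]

lemma step_B {n : ℕ} (h : n % 4 = 3) : eB (n + 1) ≤ eB n - 32 := by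
  have hd := dims n
  simp only [eL, eR, eB, eT] at hd ⊢
  simp only [rect, h]; norm_num; linarith [hd.1]

lemma grow (n : ℕ) :
    33 + 32 * (n : ℝ) ≤ eR (4 * n) ∧ 32 + 32 * (n : ℝ) ≤ eT (4 * n) ∧
    eL (4 * n) ≤ -(32 * (n : ℝ)) ∧ eB (4 * n) ≤ -(32 * (n : ℝ)) := by
  induction n with
  | zero => norm_num [eL, eR, eB, eT, rect]
  | succ n ih =>
    obtain ⟨ihR, ihT, ihL, ihB⟩ := ih
    have e4 : 4 * (n + 1) = 4 * n + 1 + 1 + 1 + 1 := by ring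
    rw [e4]
    have m0 := bnd_mono (4 * n)
    have m1 := bnd_mono (4 * n + 1)
    have m2 := bnd_mono (4 * n + 1 + 1)
    have m3 := bnd_mono (4 * n + 1 + 1 + 1)
    have sR := step_R (n := 4 * n) (by omega)
    have sT := step_T (n := 4 * n + 1) (by omega)
    have sL := step_L (n := 4 * n + 1 + 1) (by omega)
    have sB := step_B (n := 4 * n + 1 + 1 + 1) (by omega)
    push_cast
    refine ⟨?_, ?_, ?_, ?_⟩
    · have := m1.2.1; have := m2.2.1; have := m3.2.1; linarith
    · have := m2.2.2.2; have := m3.2.2.2; linarith [m0.2.2.2]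
    · have := m0.1; have := m1.1; have := m3.1; linarith
    · have := m0.2.2.1; have := m1.2.2.1; have := m2.2.2.1; linarith

lemma rect_mono {m n : ℕ} (h : m ≤ n) : rectSet m ⊆ rectSet n := by
  induction n with
  | zero => rw [Nat.le_zero.mp h]
  | succ n ih =>
    rcases Nat.lt_or_ge m (n + 1) with h' | h'
    · exact (ih (by omega)).trans (rect_mono_succ n)
    · have : m = n + 1 := by omega
      rw [this]

lemma cover (p : Pt) : ∃ n, p ∈ rectSet (4 * n) := by
  obtain ⟨n, hn⟩ := exists_nat_ge ((|p 0| + |p 1| : ℝ))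
  refine ⟨n, ?_, ?_, ?_, ?_⟩
  · have := (grow n).2.2.1
    have h1 : -(32 * (n : ℝ)) ≤ -(|p 0|) := by
      have : (n : ℝ) ≤ 32 * n := by nlinarith [(Nat.cast_nonneg n : (0:ℝ) ≤ n)]
      have := abs_nonneg (p 1)
      linarith
    linarith [neg_abs_le (p 0)]
  · have := (grow n).1
    have h1 : |p 0| ≤ 32 * (n : ℝ) := by
      have : (n : ℝ) ≤ 32 * n := by nlinarith [(Nat.cast_nonneg n : (0:ℝ) ≤ n)]
      have := abs_nonneg (p 1)
      linarith
    linarith [le_abs_self (p 0)]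
  · have := (grow n).2.2.2
    have h1 : -(32 * (n : ℝ)) ≤ -(|p 1|) := by
      have : (n : ℝ) ≤ 32 * n := by nlinarith [(Nat.cast_nonneg n : (0:ℝ) ≤ n)]
      have := abs_nonneg (p 0)
      linarith
    linarith [neg_abs_le (p 1)]
  · have := (grow n).2.1
    have h1 : |p 1| ≤ 32 * (n : ℝ) := by
      have : (n : ℝ) ≤ 32 * n := by nlinarith [(Nat.cast_nonneg n : (0:ℝ) ≤ n)]
      have := abs_nonneg (p 0)
      linarith
    linarith [le_abs_self (p 1)]

end growth

section seeds

def sbox (k : ℕ) : Set Pt := box (sd k).1 (sd k).2.1 (sd k).2.2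

lemma seed_cover : ∀ p ∈ rectSet 0, ∃ k < 9, p ∈ sbox k := by
  have memk : ∀ (k : ℕ) (p : Pt), k < 9 → (sd k).1 ≤ p 0 → p 0 ≤ (sd k).1 + (sd k).2.2 →
      (sd k).2.1 ≤ p 1 → p 1 ≤ (sd k).2.1 + (sd k).2.2 → ∃ k < 9, p ∈ sbox k :=
    fun k p hk a b c d => ⟨k, hk, a, b, c, d⟩
  intro p hp
  simp only [rectSet, eL, eR, eB, eT, rect, Set.mem_setOf_eq] at hp
  obtain ⟨h1, h2, h3, h4⟩ := hp
  rcases le_total (p 0) 18 with hx | hx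
  · rcases le_total 14 (p 1) with hy | hy
    · exact memk 0 p (by norm_num) (by simp [sd]; linarith) (by simp [sd]; linarith)
        (by simp [sd]; linarith) (by simp [sd]; linarith)
    · rcases le_total (p 0) 14 with hx2 | hx2
      · exact memk 2 p (by norm_num) (by simp [sd]; linarith) (by simp [sd]; linarith)
          (by simp [sd]; linarith) (by simp [sd]; linarith)
      · rcases le_total (p 1) 10 with hy2 | hy2
        · exact memk 3 p (by norm_num) (by simp [sd]; linarith) (by simp [sd]; linarith)
            (by simp [sd]; linarith) (by simp [sd]; linarith)
        · exact memk 7 p (by norm_num) (by simp [sd]; linarith) (by simp [sd]; linarith)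
            (by simp [sd]; linarith) (by simp [sd]; linarith)
  · rcases le_total 17 (p 1) with hy | hy
    · exact memk 1 p (by norm_num) (by simp [sd]; linarith) (by simp [sd]; linarith)
        (by simp [sd]; linarith) (by simp [sd]; linarith)
    · rcases le_total (p 0) 25 with hx2 | hx2
      · rcases le_total 10 (p 1) with hy2 | hy2
        · exact memk 6 p (by norm_num) (by simp [sd]; linarith) (by simp [sd]; linarith)
            (by simp [sd]; linarith) (by simp [sd]; linarith)
        · rcases le_total (p 0) 24 with hx3 | hx3
          · exact memk 3 p (by norm_num) (by simp [sd]; linarith) (by simp [sd]; linarith)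
              (by simp [sd]; linarith) (by simp [sd]; linarith)
          · rcases le_total (p 1) 9 with hy3 | hy3
            · exact memk 4 p (by norm_num) (by simp [sd]; linarith) (by simp [sd]; linarith)
                (by simp [sd]; linarith) (by simp [sd]; linarith)
            · exact memk 8 p (by norm_num) (by simp [sd]; linarith) (by simp [sd]; linarith)
                (by simp [sd]; linarith) (by simp [sd]; linarith)
      · rcases le_total (p 1) 9 with hy3 | hy3
        · exact memk 4 p (by norm_num) (by simp [sd]; linarith) (by simp [sd]; linarith)
            (by simp [sd]; linarith) (by simp [sd]; linarith)
        · exact memk 5 p (by norm_num) (by simp [sd]; linarith) (by simp [sd]; linarith)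
            (by simp [sd]; linarith) (by simp [sd]; linarith)

lemma seed_disj : ∀ m < 9, ∀ n < 9, m ≠ n →
    Disjoint (interior (sbox m)) (interior (sbox n)) := by
  intro m hm n hn hmn
  interval_cases m <;> interval_cases n <;>
    first
      | omega
      | (apply boxes_disj; simp only [sd]; norm_num)

lemma seed_sub_rect0 : ∀ k < 9, sbox k ⊆ rectSet 0 := by
  intro k hk p hp
  interval_cases k <;>
    simp only [sbox, sd, box, rectSet, eL, eR, eB, eT, rect, Set.mem_setOf_eq] at hp ⊢ <;>
    norm_num at hp ⊢ <;>
    exact ⟨by linarith [hp.1], by linarith [hp.2.1], by linarith [hp.2.2.1],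
      by linarith [hp.2.2.2]⟩

end seeds

section assemble

def datum (n : ℕ) : ℝ × ℝ × ℝ := if n < 9 then sd n else spir (n - 9)

lemma sd_side_pos : ∀ k < 9, 1 ≤ (sd k).2.2 := by
  intro k hk; interval_cases k <;> norm_num [sd]

lemma sd_side_le : ∀ k < 9, (sd k).2.2 ≤ 18 := by
  intro k hk; interval_cases k <;> norm_num [sd]

lemma datum_pos (n : ℕ) : 0 < (datum n).2.2 := by
  rw [datum]
  split
  · next h => linarith [sd_side_pos n h]
  · linarith [spir_side_pos (n - 9)]

def F (n : ℕ) : Sq := mkSq (datum n).1 (datum n).2.1 (datum n).2.2 (datum_pos n)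

lemma F_set (n : ℕ) : (F n).set = box (datum n).1 (datum n).2.1 (datum n).2.2 :=
  mkSq_set _ _ _ _

lemma F_side (n : ℕ) : (F n).side = (datum n).2.2 := mkSq_side _ _ _ _

lemma datum_seed {n : ℕ} (h : n < 9) : datum n = sd n := if_pos h

lemma datum_spir {n : ℕ} (h : 9 ≤ n) : datum n = spir (n - 9) := if_neg (by omega)

lemma spir_mono : StrictMono (fun n => (spir n).2.2) :=
  strictMono_nat_of_lt_succ (fun n => by linarith [spir_side_mono n])

lemma datum_side_ne {m n : ℕ} (h : m < n) : (datum m).2.2 ≠ (datum n).2.2 := by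
  rcases Nat.lt_or_ge m 9 with hm | hm
  · rcases Nat.lt_or_ge n 9 with hn | hn
    · rw [datum_seed hm, datum_seed hn]
      interval_cases m <;> interval_cases n <;> first | omega | norm_num [sd]
    · rw [datum_seed hm, datum_spir hn]
      have h1 := sd_side_le m hm
      have h2 := spir_side_pos (n - 9)
      intro he; linarith
  · rw [datum_spir (by omega : 9 ≤ m), datum_spir (by omega : 9 ≤ n)]
    exact ne_of_lt (spir_mono (by omega))

lemma F_inj : Function.Injective F := by
  intro m n h
  by_contra hne
  have : (datum m).2.2 ≠ (datum n).2.2 := by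
    rcases Nat.lt_or_ge m n with h' | h'
    · exact datum_side_ne h'
    · exact (datum_side_ne (by omega)).symm
  apply this
  rw [← F_side, ← F_side, h]

lemma F_disj {m n : ℕ} (h : m < n) :
    Disjoint (interior (F m).set) (interior (F n).set) := by
  rcases Nat.lt_or_ge n 9 with hn | hn
  · -- both seeds
    have hm : m < 9 := by omega
    rw [F_set, F_set, datum_seed hm, datum_seed hn]
    exact seed_disj m hm n hn (by omega)
  · -- n is a spiral square
    have hsub : (F m).set ⊆ rectSet (n - 9) := by
      rcases Nat.lt_or_ge m 9 with hm | hm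
      · rw [F_set, datum_seed hm]
        exact (seed_sub_rect0 m hm).trans (rect_mono (Nat.zero_le _))
      · rw [F_set, datum_spir hm]
        exact (spbox_subset (m - 9)).trans (rect_mono (by omega))
    rw [Set.disjoint_left]
    intro p hp1 hp2
    have hp1' : p ∈ rectSet (n - 9) := hsub (interior_subset hp1)
    rw [F_set, datum_spir hn] at hp2
    exact spbox_disj_rect (n - 9) p hp2 hp1'

lemma F_union : (⋃ n, (F n).set) = Set.univ := by
  have hrect : ∀ m, rectSet m ⊆ ⋃ n, (F n).set := by
    intro m
    induction m with
    | zero =>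
      intro p hp
      obtain ⟨k, hk, hpk⟩ := seed_cover p hp
      exact Set.mem_iUnion.2 ⟨k, by rw [F_set, datum_seed hk]; exact hpk⟩
    | succ m ih =>
      intro p hp
      rcases rect_step m hp with h | h
      · exact ih h
      · exact Set.mem_iUnion.2 ⟨m + 9, by
          rw [F_set, datum_spir (by omega)]
          simpa [spbox] using h⟩
  apply Set.eq_univ_of_forall
  intro p
  obtain ⟨k, hk⟩ := cover p
  exact hrect (4 * k) hk

lemma F_noncongr {m n : ℕ} (hmn : m ≠ n) : ¬ SetCongruent (F m).set (F n).set := by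
  intro h
  have : (datum m).2.2 = (datum n).2.2 := side_eq_of_congruent h
  rcases Nat.lt_or_ge m n with h' | h'
  · exact datum_side_ne h' this
  · exact datum_side_ne (by omega : n < m) this.symm

lemma F_side_ge (n : ℕ) : 1 ≤ (F n).side := by
  rw [F_side, datum]
  split
  · next h => exact sd_side_pos n h
  · linarith [spir_side_pos (n - 9)]

end assemble

/-- The plane can be tiled by infinitely many pairwise noncongruent squares whose
side lengths are bounded from below by a positive constant. -/
theorem stmt_4 :
    ∃ (𝒮 : Set Sq) (c : ℝ),
      𝒮.Infinite ∧
      (∀ S ∈ 𝒮, ∀ S' ∈ 𝒮, S ≠ S' → Disjoint (interior S.set) (interior S'.set)) ∧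
      (⋃ S ∈ 𝒮, S.set) = Set.univ ∧
      (∀ S ∈ 𝒮, ∀ S' ∈ 𝒮, S ≠ S' → ¬ SetCongruent S.set S'.set) ∧
      0 < c ∧ (∀ S ∈ 𝒮, c ≤ S.side) := by
  refine ⟨Set.range F, 1, ?_, ?_, ?_, ?_, one_pos, ?_⟩
  · exact Set.infinite_range_of_injective F_inj
  · rintro S ⟨m, rfl⟩ S' ⟨n, rfl⟩ hne
    have hmn : m ≠ n := fun h => hne (by rw [h])
    rcases Nat.lt_or_ge m n with h | h
    · exact F_disj h
    · exact (F_disj (by omega : n < m)).symm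
  · rw [Set.biUnion_range]
    exact F_union
  · rintro S ⟨m, rfl⟩ S' ⟨n, rfl⟩ hne
    exact F_noncongr (fun h => hne (by rw [h]))
  · rintro S ⟨n, rfl⟩
    exact F_side_ge n

end
end

section
/- In 𝒯, every uncut edge of a triangle of 𝒯 continues at least at one of its two endpoints. -/
noncomputable section

/-- An equilateral triangle in the plane, given by its three vertices. -/
structure EqTri : Type where
  A : Pt
  B : Pt
  C : Pt
  indep : AffineIndependent ℝ ![A, B, C]
  eqAB : dist A B = dist B C
  eqBC : dist B C = dist C A

/-- The (closed) triangle as a subset of the plane. -/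
def EqTri.set (T : EqTri) : Set Pt := convexHull ℝ {T.A, T.B, T.C}

/-- The side length of an equilateral triangle. -/
def EqTri.side (T : EqTri) : ℝ := dist T.A T.B

/-- The vertex set of a triangle. -/
def EqTri.vertices (T : EqTri) : Set Pt := {T.A, T.B, T.C}

/-- The ordered pair `(P, Q)` spans an edge of `T`. -/
def EqTri.IsEdge (T : EqTri) (P Q : Pt) : Prop :=
  (P = T.A ∧ Q = T.B) ∨ (P = T.B ∧ Q = T.A) ∨
  (P = T.B ∧ Q = T.C) ∨ (P = T.C ∧ Q = T.B) ∨
  (P = T.C ∧ Q = T.A) ∨ (P = T.A ∧ Q = T.C)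

/-- The edges (sides) of a triangle, as subsets of the plane. -/
def EqTri.edges (T : EqTri) : Set (Set Pt) :=
  {segment ℝ T.A T.B, segment ℝ T.B T.C, segment ℝ T.C T.A}

/-- A family of equilateral triangles tiles the plane: pairwise disjoint interiors,
union is everything. -/
def IsTiling (𝒯 : Set EqTri) : Prop :=
  (∀ T ∈ 𝒯, ∀ T' ∈ 𝒯, T ≠ T' → Disjoint (interior T.set) (interior T'.set)) ∧
  (⋃ T ∈ 𝒯, T.set) = Set.univ

/-- No two (distinct) triangles of the family share a side. -/
def NoSharedSide (𝒯 : Set EqTri) : Prop :=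
  ∀ T ∈ 𝒯, ∀ T' ∈ 𝒯, T ≠ T' → ∀ e ∈ T.edges, ∀ e' ∈ T'.edges, e ≠ e'

/-- The side lengths of the triangles of the family are bounded below by a positive
constant. -/
def SidesBoundedBelow (𝒯 : Set EqTri) : Prop :=
  ∃ c : ℝ, 0 < c ∧ ∀ T ∈ 𝒯, c ≤ T.side

/-- The standing assumptions: `𝒯` is a tiling of the plane by equilateral triangles,
side lengths bounded below by a positive constant, no two triangles share a side. -/
def GoodTiling (𝒯 : Set EqTri) : Prop :=
  IsTiling 𝒯 ∧ SidesBoundedBelow 𝒯 ∧ NoSharedSide 𝒯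

/-- The edge `[P,Q]` of `T ∈ 𝒯` is subdivided: some interior point of it is a vertex of
another triangle of the tiling. -/
def Subdivided (𝒯 : Set EqTri) (T : EqTri) (P Q : Pt) : Prop :=
  ∃ T' ∈ 𝒯, T' ≠ T ∧ ∃ V ∈ T'.vertices, V ∈ openSegment ℝ P Q

/-- The edge `[A,B]` of `T ∈ 𝒯` continues at `A`: the point `A` lies in the interior of an
edge `e` of another triangle of the tiling, and `e` contains an interior point of `[A,B]`. -/
def ContinuesAt (𝒯 : Set EqTri) (T : EqTri) (A B : Pt) : Prop :=
  ∃ T' ∈ 𝒯, T' ≠ T ∧ ∃ P Q : Pt, T'.IsEdge P Q ∧ A ∈ openSegment ℝ P Q ∧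
    ∃ X ∈ segment ℝ P Q, X ∈ openSegment ℝ A B

/-- A triangle of the tiling is small if all three of its edges are uncut. -/
def SmallTri (𝒯 : Set EqTri) (T : EqTri) : Prop :=
  ¬ Subdivided 𝒯 T T.A T.B ∧ ¬ Subdivided 𝒯 T T.B T.C ∧ ¬ Subdivided 𝒯 T T.C T.A

/-- A triangle of the tiling is large if all three of its edges are subdivided. -/
def LargeTri (𝒯 : Set EqTri) (T : EqTri) : Prop :=
  Subdivided 𝒯 T T.A T.B ∧ Subdivided 𝒯 T T.B T.C ∧ Subdivided 𝒯 T T.C T.A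

/-- A triangle of the tiling is improper if it has an uncut edge and also an edge that
continues at neither of its endpoints. -/
def ImproperTri (𝒯 : Set EqTri) (T : EqTri) : Prop :=
  (∃ P Q : Pt, T.IsEdge P Q ∧ ¬ Subdivided 𝒯 T P Q) ∧
  (∃ P Q : Pt, T.IsEdge P Q ∧ ¬ ContinuesAt 𝒯 T P Q ∧ ¬ ContinuesAt 𝒯 T Q P)

/-- Two subsets of the plane are congruent if some isometry of the plane maps one
onto the other. -/
def PtCongruent (s t : Set Pt) : Prop := ∃ f : Pt ≃ᵢ Pt, f '' s = t


section Aux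
open Metric Set MeasureTheory RealInnerProductSpace Filter Topology


lemma range_pair {α : Type*} (A B : α) : Set.range ![A,B] = {A,B} := by
  ext x
  constructor
  · rintro ⟨i, rfl⟩; fin_cases i <;> simp
  · rintro (rfl|rfl)
    exacts [⟨0, rfl⟩, ⟨1, rfl⟩]

lemma combo_mem_hull {A B C : Pt} {a b c : ℝ} (ha : 0 ≤ a) (hb : 0 ≤ b) (hc : 0 ≤ c)
    (hsum : a + b + c = 1) : a • A + b • B + c • C ∈ convexHull ℝ ({A,B,C} : Set Pt) := by
  have := Finset.centerMass_mem_convexHull (Finset.univ : Finset (Fin 3)) (w := ![a,b,c])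
    (z := ![A,B,C]) (s := ({A,B,C} : Set Pt)) (by intro i _; fin_cases i <;> simpa)
    (by rw [Fin.sum_univ_three]; simp [hsum]) (by
      intro i _; fin_cases i <;> simp)
  rwa [Finset.centerMass_eq_of_sum_1, Fin.sum_univ_three] at this
  · rw [Fin.sum_univ_three]; simpa using hsum

lemma solve_bound {a b p q s2 : ℝ} (hs2 : 0 < s2) (hp : p = a*s2 + b*(s2/2))
    (hq : q = a*(s2/2) + b*s2) (hp1 : -(s2/6) ≤ p) (hp2 : p ≤ s2/6)
    (hq1 : -(s2/6) ≤ q) (hq2 : q ≤ s2/6) :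
    0 ≤ 1/3 + a ∧ 0 ≤ 1/3 + b ∧ 0 ≤ 1/3 - a - b := by
  refine ⟨?_, ?_, ?_⟩ <;> nlinarith [hs2, hp, hq]

lemma inball {A B C : Pt} {s : ℝ} (hs : 0 < s) (hAB : dist A B = s) (hBC : dist B C = s)
    (hCA : dist C A = s) :
    closedBall ((3:ℝ)⁻¹ • (A + B + C)) (s/6) ⊆ convexHull ℝ ({A,B,C} : Set Pt) := by
  intro z hz
  set X := A - C with hX
  set Y := B - C with hY
  set u := z - (3:ℝ)⁻¹ • (A + B + C) with hu
  have hnu : ‖u‖ ≤ s/6 := by rw [mem_closedBall, dist_eq_norm] at hz; exact hz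
  have hnX : ‖X‖ = s := by rw [hX, ← dist_eq_norm, dist_comm]; exact hCA
  have hnY : ‖Y‖ = s := by rw [hY, ← dist_eq_norm]; exact hBC
  have hXX : ⟪X, X⟫ = s^2 := by rw [real_inner_self_eq_norm_sq, hnX]
  have hYY : ⟪Y, Y⟫ = s^2 := by rw [real_inner_self_eq_norm_sq, hnY]
  have hXY : ⟪X, Y⟫ = s^2/2 := by
    have h1 : ‖X - Y‖ = s := by
      rw [hX, hY, show A - C - (B - C) = A - B by abel, ← dist_eq_norm, hAB]
    have h2 := norm_sub_sq_real X Y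
    rw [h1, hnX, hnY] at h2
    nlinarith
  have hYX : ⟪Y, X⟫ = s^2/2 := by rw [real_inner_comm]; exact hXY
  have hs2 : (0:ℝ) < s^2 := by positivity
  have hind : LinearIndependent ℝ ![X, Y] := by
    rw [LinearIndependent.pair_iff]
    intro a b hab
    have h1 : ⟪a • X + b • Y, X⟫ = 0 := by rw [hab, inner_zero_left]
    have h2 : ⟪a • X + b • Y, Y⟫ = 0 := by rw [hab, inner_zero_left]
    rw [inner_add_left, real_inner_smul_left, real_inner_smul_left, hXX, hYX] at h1
    rw [inner_add_left, real_inner_smul_left, real_inner_smul_left, hXY, hYY] at h2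
    constructor <;> nlinarith
  have hspan : Submodule.span ℝ ({X, Y} : Set Pt) = ⊤ := by
    have := hind.span_eq_top_of_card_eq_finrank (by simp [finrank_euclideanSpace_fin])
    rwa [range_pair] at this
  obtain ⟨a, b, hab⟩ := Submodule.mem_span_pair.mp (hspan ▸ Submodule.mem_top (x := u))
  have hp : ⟪u, X⟫ = a * s^2 + b * (s^2/2) := by
    rw [← hab, inner_add_left, real_inner_smul_left, real_inner_smul_left, hXX, hYX]
  have hq : ⟪u, Y⟫ = a * (s^2/2) + b * s^2 := by
    rw [← hab, inner_add_left, real_inner_smul_left, real_inner_smul_left, hXY, hYY]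
  have hpb : |⟪u, X⟫| ≤ s^2/6 := by
    calc |⟪u, X⟫| ≤ ‖u‖ * ‖X‖ := abs_real_inner_le_norm u X
    _ ≤ (s/6) * s := by apply mul_le_mul hnu (le_of_eq hnX) (norm_nonneg _) (by positivity)
    _ = s^2/6 := by ring
  have hqb : |⟪u, Y⟫| ≤ s^2/6 := by
    calc |⟪u, Y⟫| ≤ ‖u‖ * ‖Y‖ := abs_real_inner_le_norm u Y
    _ ≤ (s/6) * s := by apply mul_le_mul hnu (le_of_eq hnY) (norm_nonneg _) (by positivity)
    _ = s^2/6 := by ring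
  rw [abs_le] at hpb hqb
  obtain ⟨ha1, hb1, hc1⟩ := solve_bound hs2 hp hq hpb.1 hpb.2 hqb.1 hqb.2
  have hz_eq : (1/3+a) • A + (1/3+b) • B + (1/3-a-b) • C = z := by
    have hz2 : z = (3:ℝ)⁻¹ • (A+B+C) + u := by rw [hu]; abel
    rw [hz2, ← hab, hX, hY]; module
  rw [← hz_eq]
  exact combo_mem_hull ha1 hb1 hc1 (by ring)


lemma range_triple {α : Type*} (A B C : α) : Set.range ![A,B,C] = {A,B,C} := by
  ext x
  constructor
  · rintro ⟨i, rfl⟩; fin_cases i <;> simp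
  · rintro (rfl|rfl|rfl)
    exacts [⟨0, rfl⟩, ⟨1, rfl⟩, ⟨2, rfl⟩]

def triBasis {A B C : Pt} (h : AffineIndependent ℝ ![A,B,C]) : AffineBasis (Fin 3) ℝ Pt :=
  ⟨![A,B,C], h, by
    rw [h.affineSpan_eq_top_iff_card_eq_finrank_add_one]
    simp [finrank_euclideanSpace_fin]⟩

@[simp] lemma triBasis_apply0 {A B C : Pt} (h : AffineIndependent ℝ ![A,B,C]) : triBasis h 0 = A := rfl
@[simp] lemma triBasis_apply1 {A B C : Pt} (h : AffineIndependent ℝ ![A,B,C]) : triBasis h 1 = B := rfl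
@[simp] lemma triBasis_apply2 {A B C : Pt} (h : AffineIndependent ℝ ![A,B,C]) : triBasis h 2 = C := rfl

lemma hull_eq {A B C : Pt} (h : AffineIndependent ℝ ![A,B,C]) :
    convexHull ℝ {A,B,C} = convexHull ℝ (Set.range (triBasis h)) := by
  congr 1
  rw [show ((triBasis h : Fin 3 → Pt)) = ![A,B,C] from rfl, range_triple]

lemma mem_hull_iff {A B C : Pt} (h : AffineIndependent ℝ ![A,B,C]) (x : Pt) :
    x ∈ convexHull ℝ {A,B,C} ↔ ∀ i, 0 ≤ (triBasis h).coord i x := by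
  rw [hull_eq h, AffineBasis.convexHull_eq_nonneg_coord]; rfl

lemma mem_interior_hull_iff {A B C : Pt} (h : AffineIndependent ℝ ![A,B,C]) (x : Pt) :
    x ∈ interior (convexHull ℝ {A,B,C}) ↔ ∀ i, 0 < (triBasis h).coord i x := by
  rw [hull_eq h, AffineBasis.interior_convexHull]; rfl

lemma sum_coord {A B C : Pt} (h : AffineIndependent ℝ ![A,B,C]) (x : Pt) :
    (triBasis h).coord 0 x + (triBasis h).coord 1 x + (triBasis h).coord 2 x = 1 := by
  have := (triBasis h).sum_coord_apply_eq_one x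
  rwa [Fin.sum_univ_three] at this

lemma rep3 {A B C : Pt} (h : AffineIndependent ℝ ![A,B,C]) (x : Pt) :
    x = (triBasis h).coord 0 x • A + (triBasis h).coord 1 x • B + (triBasis h).coord 2 x • C := by
  have h1 := (triBasis h).affineCombination_coord_eq_self x
  rw [Finset.affineCombination_eq_linear_combination _ _ _ ((triBasis h).sum_coord_apply_eq_one x)] at h1
  rw [Fin.sum_univ_three] at h1
  exact h1.symm

lemma EqTri.distAB (T : EqTri) : dist T.A T.B = T.side := rfl
lemma EqTri.distBC (T : EqTri) : dist T.B T.C = T.side := T.eqAB.symm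
lemma EqTri.distCA (T : EqTri) : dist T.C T.A = T.side := (T.eqAB.trans T.eqBC).symm

lemma EqTri.side_pos (T : EqTri) : 0 < T.side := by
  rw [EqTri.side, dist_pos]
  intro hAB
  have : (0 : Fin 3) = 1 :=
    T.indep.injective (show ![T.A,T.B,T.C] 0 = ![T.A,T.B,T.C] 1 by simpa using hAB)
  exact absurd this (by decide)

lemma EqTri.subset_ball (T : EqTri) : T.set ⊆ closedBall T.A T.side := by
  apply convexHull_min _ (convex_closedBall _ _)
  rintro x (rfl|rfl|rfl) <;> rw [mem_closedBall]
  · simp [T.side_pos.le]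
  · rw [dist_comm]; exact (T.distAB).le
  · exact T.distCA.le

lemma EqTri.convex (T : EqTri) : Convex ℝ T.set := convex_convexHull ℝ _

lemma EqTri.isClosed (T : EqTri) : IsClosed T.set :=
  ((Set.finite_singleton _).insert _ |>.insert _).isCompact_convexHull ℝ |>.isClosed

lemma EqTri.interior_nonempty (T : EqTri) : (interior T.set).Nonempty := by
  rw [EqTri.set, hull_eq T.indep]
  exact ⟨_, (triBasis T.indep).centroid_mem_interior_convexHull⟩

/-- A closed triangle of the tiling does not meet the interior of another one. -/
lemma inter_interior_empty {𝒯 : Set EqTri}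
    (hdisj : ∀ T ∈ 𝒯, ∀ T' ∈ 𝒯, T ≠ T' → Disjoint (interior T.set) (interior T'.set))
    {T T' : EqTri} (hT : T ∈ 𝒯) (hT' : T' ∈ 𝒯) (hne : T ≠ T') {z : Pt}
    (hz1 : z ∈ T'.set) (hz2 : z ∈ interior T.set) : False := by
  obtain ⟨w, hw⟩ := T'.interior_nonempty
  have key : ∀ t ∈ Set.Ioc (0:ℝ) 1, z + t • (w - z) ∈ interior T'.set :=
    fun t ht => T'.convex.add_smul_sub_mem_interior hz1 hw ht
  have hcont : ContinuousAt (fun t : ℝ => z + t • (w - z)) 0 := by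
    apply Continuous.continuousAt
    continuity
  have hmem : ∀ᶠ t in 𝓝 (0:ℝ), z + t • (w - z) ∈ interior T.set := by
    apply hcont.eventually_mem
    rw [show z + (0:ℝ) • (w - z) = z by simp]
    exact isOpen_interior.mem_nhds hz2
  have hIoo : ∀ᶠ t in 𝓝[>] (0:ℝ), t ∈ Set.Ioo (0:ℝ) 1 :=
    Ioo_mem_nhdsGT_of_mem ⟨le_refl _, zero_lt_one⟩
  obtain ⟨t, ht1, ht2⟩ := ((hmem.filter_mono nhdsWithin_le_nhds).and hIoo).exists
  exact Set.disjoint_left.mp (hdisj T hT T' hT' hne) ht1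
    (key t ⟨ht2.1, ht2.2.le⟩)

/-- Only finitely many triangles of the tiling meet a given ball of radius `c`. -/
lemma finite_meeting {𝒯 : Set EqTri}
    (hdisj : ∀ T ∈ 𝒯, ∀ T' ∈ 𝒯, T ≠ T' → Disjoint (interior T.set) (interior T'.set))
    {c : ℝ} (hc : 0 < c) (hside : ∀ T ∈ 𝒯, c ≤ T.side) (M : Pt) :
    {T' | T' ∈ 𝒯 ∧ (T'.set ∩ closedBall M c).Nonempty}.Finite := by
  set F := {T' | T' ∈ 𝒯 ∧ (T'.set ∩ closedBall M c).Nonempty} with hF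
  have hex : ∀ i : F, ∃ g : Pt, ball g (c/6) ⊆ interior (i : EqTri).set ∧
      ball g (c/6) ⊆ closedBall M (4*c) := by
    rintro ⟨T', hT', hne⟩
    obtain ⟨x, hxT, hxM⟩ := hne
    set s := T'.side with hs_def
    have hs : 0 < s := T'.side_pos
    have hcs : c ≤ s := hside T' hT'
    set t : ℝ := c / s with ht_def
    have ht0 : 0 < t := by positivity
    have ht1 : t ≤ 1 := div_le_one_of_le₀ hcs hs.le
    set A' := x + t • (T'.A - x) with hA'
    set B' := x + t • (T'.B - x) with hB'
    set C' := x + t • (T'.C - x) with hC'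
    have hdists : ∀ U V : Pt, dist U V = s → dist (x + t • (U - x)) (x + t • (V - x)) = c := by
      intro U V hUV
      rw [dist_eq_norm, show (x + t • (U - x)) - (x + t • (V - x)) = t • (U - V) by module,
        norm_smul, Real.norm_eq_abs, abs_of_pos ht0, ← dist_eq_norm, hUV, ht_def,
        div_mul_cancel₀ _ hs.ne']
    have hmem : ∀ U : Pt, U ∈ T'.set → x + t • (U - x) ∈ T'.set := by
      intro U hU
      have := T'.convex hxT hU (by linarith : (0:ℝ) ≤ 1 - t) ht0.le (by ring)
      convert this using 1
      module
    have hrad : ∀ U : Pt, dist U T'.A ≤ s → dist (x + t • (U - x)) x ≤ 2*c := by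
      intro U hU
      rw [dist_eq_norm, show (x + t • (U - x)) - x = t • (U - x) by module, norm_smul,
        Real.norm_eq_abs, abs_of_pos ht0]
      have hxA : dist x T'.A ≤ s := T'.subset_ball hxT
      have : ‖U - x‖ ≤ 2 * s := by
        rw [← dist_eq_norm]
        calc dist U x ≤ dist U T'.A + dist T'.A x := dist_triangle _ _ _
        _ ≤ s + s := by rw [dist_comm T'.A x]; exact add_le_add hU hxA
        _ = 2 * s := by ring
      calc t * ‖U - x‖ ≤ t * (2 * s) := by
            exact mul_le_mul_of_nonneg_left this ht0.le
      _ = 2 * c := by rw [ht_def]; field_simp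
    refine ⟨(3:ℝ)⁻¹ • (A' + B' + C'), ?_, ?_⟩
    · -- ball inside interior
      apply interior_maximal _ isOpen_ball
      refine (ball_subset_closedBall.trans (inball hc (hdists _ _ T'.distAB)
        (hdists _ _ T'.distBC) (hdists _ _ T'.distCA))).trans ?_
      apply convexHull_min _ T'.convex
      rintro y (rfl|rfl|rfl)
      · exact hmem _ (subset_convexHull ℝ _ (by left; rfl))
      · exact hmem _ (subset_convexHull ℝ _ (by right; left; rfl))
      · exact hmem _ (subset_convexHull ℝ _ (by right; right; rfl))
    · -- ball inside big ball
      intro y hy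
      have hA : dist A' x ≤ 2*c := hrad T'.A (by rw [dist_self]; exact hs.le)
      have hB : dist B' x ≤ 2*c := hrad T'.B (by rw [dist_comm]; exact le_of_eq T'.distAB)
      have hC : dist C' x ≤ 2*c := hrad T'.C (le_of_eq T'.distCA)
      rw [dist_eq_norm] at hA hB hC
      have h1 : dist ((3:ℝ)⁻¹ • (A' + B' + C')) x ≤ 2*c := by
        rw [dist_eq_norm, show (3:ℝ)⁻¹ • (A' + B' + C') - x
          = (3:ℝ)⁻¹ • ((A' - x) + ((B' - x) + (C' - x))) by module, norm_smul]
        have hsum : ‖(A' - x) + ((B' - x) + (C' - x))‖ ≤ 2*c + (2*c + 2*c) :=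
          norm_add_le_of_le hA (norm_add_le_of_le hB hC)
        rw [Real.norm_eq_abs]
        calc |(3:ℝ)⁻¹| * ‖(A' - x) + ((B' - x) + (C' - x))‖
            ≤ (3:ℝ)⁻¹ * (2*c + (2*c + 2*c)) := by
              rw [abs_of_pos (by norm_num : (0:ℝ) < 3⁻¹)]
              exact mul_le_mul_of_nonneg_left hsum (by norm_num)
        _ = 2*c := by ring
      have h2 : dist x M ≤ c := hxM
      calc dist y M ≤ dist y ((3:ℝ)⁻¹ • (A' + B' + C')) + dist ((3:ℝ)⁻¹ • (A' + B' + C')) x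
          + dist x M := dist_triangle4 _ _ _ _
      _ ≤ c/6 + 2*c + c := by
          refine add_le_add (add_le_add (le_of_lt hy) h1) h2
      _ ≤ 4*c := by linarith
  choose g hg1 hg2 using hex
  have hmeas := MeasureTheory.Measure.finite_const_le_meas_of_disjoint_iUnion (volume : Measure Pt)
    (ε := volume (ball (0:Pt) (c/6)))
    (measure_ball_pos volume (0:Pt) (by positivity))
    (As := fun i : F => ball (g i) (c/6)) (fun i => measurableSet_ball)
    (by
      intro i j hij
      have hne : (i : EqTri) ≠ (j : EqTri) := fun hh => hij (Subtype.coe_injective hh)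
      exact Set.disjoint_of_subset (hg1 i) (hg1 j)
        (hdisj _ i.2.1 _ j.2.1 hne))
    (by
      refine ne_top_of_le_ne_top (measure_closedBall_lt_top (μ := (volume : Measure Pt)) (x := M) (r := 4*c)).ne ?_
      exact measure_mono (Set.iUnion_subset fun i => hg2 i))
  have huniv : (Set.univ : Set F).Finite := by
    refine hmeas.subset ?_
    intro i _
    show volume (ball (0:Pt) (c/6)) ≤ volume (ball (g i) (c/6))
    rw [MeasureTheory.Measure.addHaar_ball_center (volume : Measure Pt) (g i)]
  exact Set.finite_coe_iff.mp (Set.finite_univ_iff.mp huniv)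

/-- There is another triangle of the tiling containing the midpoint of an edge. -/
lemma inner_self_pos' {v : Pt} (hv : v ≠ 0) : 0 < ⟪v, v⟫ := by
  rw [real_inner_self_eq_norm_sq]
  have := norm_pos_iff.mpr hv
  positivity

lemma exists_tri_contains {𝒯 : Set EqTri}
    (hdisj : ∀ T ∈ 𝒯, ∀ T' ∈ 𝒯, T ≠ T' → Disjoint (interior T.set) (interior T'.set))
    (hcover : (⋃ T ∈ 𝒯, T.set) = Set.univ)
    {c : ℝ} (hc : 0 < c) (hside : ∀ T ∈ 𝒯, c ≤ T.side)
    {T : EqTri} (hT : T ∈ 𝒯) {P Q R : Pt} (hset : T.set = convexHull ℝ {P,Q,R})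
    (hInd : AffineIndependent ℝ ![P,Q,R]) :
    ∃ T' ∈ 𝒯, T' ≠ T ∧ midpoint ℝ P Q ∈ T'.set := by
  classical
  set M := midpoint ℝ P Q with hM
  set w := Q - P with hw_def
  have hPQ : P ≠ Q := by
    intro hh
    have : (0 : Fin 3) = 1 := hInd.injective (show ![P,Q,R] 0 = ![P,Q,R] 1 by simpa using hh)
    exact absurd this (by decide)
  have hw : w ≠ 0 := sub_ne_zero.mpr (Ne.symm hPQ)
  have hww : (0:ℝ) < ⟪w, w⟫ := inner_self_pos' hw
  set d := P - R with hd_def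
  set r := ⟪d, w⟫ / ⟪w, w⟫ with hr_def
  set v := d - r • w with hv_def
  have hwv : ⟪w, v⟫ = 0 := by
    rw [hv_def, inner_sub_right, real_inner_smul_right, hr_def, div_mul_cancel₀ _ hww.ne',
      real_inner_comm, sub_self]
  have hdv : ⟪d, v⟫ = ⟪v, v⟫ := by
    have hd2 : d = v + r • w := by rw [hv_def]; module
    rw [hd2, inner_add_left, real_inner_smul_left, hwv]
    ring
  have hv0 : v ≠ 0 := by
    intro h0
    have hd_eq : d = r • w := sub_eq_zero.mp (hv_def ▸ h0)
    have hcol : Collinear ℝ ({P, Q, R} : Set Pt) := by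
      rw [collinear_iff_of_mem (show P ∈ ({P, Q, R} : Set Pt) by left; rfl)]
      refine ⟨w, ?_⟩
      intro z hz
      rcases hz with h|h|h
      · exact ⟨0, by rw [h]; simp⟩
      · exact ⟨1, by rw [h, hw_def]; simp⟩
      · refine ⟨-r, ?_⟩
        rw [h, show R = P - d by rw [hd_def]; abel, hd_eq, vadd_eq_add, neg_smul]
        abel
    rw [affineIndependent_iff_not_collinear_set] at hInd
    exact hInd hcol
  have hvv : (0:ℝ) < ⟪v, v⟫ := inner_self_pos' hv0
  have hPM : P - M = -(2⁻¹ : ℝ) • w := by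
    rw [hM, midpoint_eq_smul_add, hw_def]
    have h2 : (⅟2 : ℝ) = 2⁻¹ := rfl
    rw [h2]
    module
  have hQM : Q - M = (2⁻¹ : ℝ) • w := by
    rw [hM, midpoint_eq_smul_add]
    have h2 : (⅟2 : ℝ) = 2⁻¹ := rfl
    rw [h2, hw_def]
    module
  have hhalf : ∀ y ∈ T.set, ⟪y - M, v⟫ ≤ 0 := by
    intro y hy
    rw [hset] at hy
    have hconv : Convex ℝ {y : Pt | ⟪y, v⟫ ≤ ⟪M, v⟫} :=
      convex_halfSpace_le ⟨fun a b => inner_add_left a b v, fun r a => real_inner_smul_left a v r⟩ _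
    have hsub : ({P, Q, R} : Set Pt) ⊆ {y : Pt | ⟪y, v⟫ ≤ ⟪M, v⟫} := by
      intro z hz
      rcases hz with h|h|h <;> rw [Set.mem_setOf_eq, h, ← sub_nonpos, ← inner_sub_left]
      · rw [hPM, real_inner_smul_left, hwv]; simp
      · rw [hQM, real_inner_smul_left, hwv]; simp
      · have hRM : R - M = (P - M) - d := by rw [hd_def]; abel
        rw [hRM, inner_sub_left, hPM, real_inner_smul_left, hwv, hdv]
        simp only [neg_smul, zero_sub, neg_mul, zero_mul, neg_zero, mul_zero, zero_sub]
        linarith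
    have := convexHull_min hsub hconv hy
    rw [Set.mem_setOf_eq, ← sub_nonpos, ← inner_sub_left] at this
    exact this
  -- the approximating sequence
  set x : ℕ → Pt := fun n => M + (c/((n+1) * ‖v‖)) • v with hx_def
  have hvn : (0:ℝ) < ‖v‖ := norm_pos_iff.mpr hv0
  have hxdist : ∀ n : ℕ, dist (x n) M = c/(n+1) := by
    intro n
    rw [hx_def, dist_eq_norm, show M + (c/((n+1) * ‖v‖)) • v - M = (c/((n+1) * ‖v‖)) • v by abel,
      norm_smul, Real.norm_eq_abs, abs_of_pos (by positivity)]
    field_simp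
  have hxnot : ∀ n : ℕ, x n ∉ T.set := by
    intro n hmem
    have := hhalf (x n) hmem
    rw [hx_def, show M + (c/((n+1) * ‖v‖)) • v - M = (c/((n+1) * ‖v‖)) • v by abel,
      real_inner_smul_left] at this
    nlinarith [hvv, (by positivity : (0:ℝ) < c/((n+1) * ‖v‖))]
  have hxcov : ∀ n : ℕ, ∃ T' ∈ 𝒯, x n ∈ T'.set := by
    intro n
    have : x n ∈ (⋃ T ∈ 𝒯, T.set) := by rw [hcover]; trivial
    simpa using this
  choose f hf1 hf2 using hxcov
  set F := {T' | T' ∈ 𝒯 ∧ (T'.set ∩ closedBall M c).Nonempty} with hF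
  have hfF : ∀ n, f n ∈ F := by
    intro n
    refine ⟨hf1 n, x n, hf2 n, ?_⟩
    rw [mem_closedBall, hxdist]
    rw [div_le_iff₀ (by positivity)]
    nlinarith [hc]
  have hFfin : F.Finite := finite_meeting hdisj hc hside M
  haveI : Finite F := Set.finite_coe_iff.mpr hFfin
  set f' : ℕ → F := fun n => ⟨f n, hfF n⟩ with hf'
  obtain ⟨T₀, hT₀⟩ := Finite.exists_infinite_fiber f'
  replace hT₀ : (f' ⁻¹' {T₀}).Infinite := Set.infinite_coe_iff.mp hT₀
  have hT₀mem : (T₀ : EqTri) ∈ 𝒯 := T₀.2.1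
  obtain ⟨n₀, hn₀⟩ := hT₀.nonempty
  have hfn₀ : f n₀ = (T₀ : EqTri) := congrArg Subtype.val (Set.mem_singleton_iff.mp hn₀)
  have hT₀ne : (T₀ : EqTri) ≠ T := by
    intro hh
    exact hxnot n₀ (by rw [← hh, ← hfn₀]; exact hf2 n₀)
  refine ⟨T₀, hT₀mem, hT₀ne, ?_⟩
  have hMcl : M ∈ closure (T₀ : EqTri).set := by
    rw [Metric.mem_closure_iff]
    intro ε hε
    obtain ⟨n, hnfib, hngt⟩ := hT₀.exists_gt (Nat.ceil (c/ε))
    have hfn : f n = (T₀ : EqTri) := congrArg Subtype.val (Set.mem_singleton_iff.mp hnfib)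
    refine ⟨x n, by rw [← hfn]; exact hf2 n, ?_⟩
    rw [dist_comm, hxdist]
    rw [div_lt_iff₀ (by positivity)]
    have h1 : c/ε < n + 1 := by
      calc c/ε ≤ Nat.ceil (c/ε) := Nat.le_ceil _
      _ < (n : ℝ) := by exact_mod_cast hngt
      _ < n + 1 := by linarith
    calc c = (c/ε) * ε := by field_simp
    _ < (n+1) * ε := by exact mul_lt_mul_of_pos_right h1 hε
    _ = ε * (n+1) := by ring
  rwa [(T₀ : EqTri).isClosed.closure_eq] at hMcl

lemma indep_swap01 {A B C : Pt} (h : AffineIndependent ℝ ![A,B,C]) :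
    AffineIndependent ℝ ![B,A,C] := by
  have := h.comp_embedding (Equiv.swap (0:Fin 3) 1).toEmbedding
  convert this using 1
  funext i
  fin_cases i <;> simp [Equiv.swap_apply_def] <;> rfl

lemma indep_swap12 {A B C : Pt} (h : AffineIndependent ℝ ![A,B,C]) :
    AffineIndependent ℝ ![A,C,B] := by
  have := h.comp_embedding (Equiv.swap (1:Fin 3) 2).toEmbedding
  convert this using 1
  funext i
  fin_cases i <;> simp [Equiv.swap_apply_def] <;> rfl

lemma indep_rot {A B C : Pt} (h : AffineIndependent ℝ ![A,B,C]) :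
    AffineIndependent ℝ ![B,C,A] := indep_swap12 (indep_swap01 h)

lemma tri_set_eq {A B C : Pt} : ({A,B,C} : Set Pt) = {B,A,C} := by
  ext x; simp; tauto

lemma tri_set_rot {A B C : Pt} : ({A,B,C} : Set Pt) = {B,C,A} := by
  ext x; simp; tauto

lemma edge_data {T : EqTri} {P Q : Pt} (h : T.IsEdge P Q) :
    ∃ R : Pt, T.set = convexHull ℝ {P,Q,R} ∧ AffineIndependent ℝ ![P,Q,R] ∧
      segment ℝ P Q ∈ T.edges := by
  rcases h with ⟨rfl, rfl⟩|⟨rfl, rfl⟩|⟨rfl, rfl⟩|⟨rfl, rfl⟩|⟨rfl, rfl⟩|⟨rfl, rfl⟩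
  · exact ⟨T.C, rfl, T.indep, by left; rfl⟩
  · exact ⟨T.C, by rw [EqTri.set, tri_set_eq], indep_swap01 T.indep,
      by left; rw [segment_symm]⟩
  · exact ⟨T.A, by rw [EqTri.set, tri_set_rot], indep_rot T.indep,
      by right; left; rfl⟩
  · exact ⟨T.A, by rw [EqTri.set, tri_set_rot, tri_set_eq], indep_swap01 (indep_rot T.indep),
      by right; left; rw [segment_symm]⟩
  · exact ⟨T.B, by rw [EqTri.set, tri_set_rot, tri_set_rot], indep_rot (indep_rot T.indep),
      by right; right; exact rfl⟩
  · exact ⟨T.B, by rw [EqTri.set, tri_set_rot, tri_set_rot, tri_set_eq],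
      indep_swap01 (indep_rot (indep_rot T.indep)),
      by right; right; rw [segment_symm]; exact rfl⟩

lemma EqTri.IsEdge.symm {T : EqTri} {P Q : Pt} (h : T.IsEdge P Q) : T.IsEdge Q P := by
  unfold EqTri.IsEdge at *
  tauto

lemma coord_midpoint0 {P Q R : Pt} (hInd : AffineIndependent ℝ ![P,Q,R]) :
    (triBasis hInd).coord 0 (midpoint ℝ P Q) = 2⁻¹ := by
  have e0 : (triBasis hInd).coord 0 P = 1 := by
    have := (triBasis hInd).coord_apply (0:Fin 3) 0
    simpa using this
  have e1 : (triBasis hInd).coord 0 Q = 0 := by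
    have := (triBasis hInd).coord_apply (0:Fin 3) 1
    simpa using this
  rw [AffineMap.map_midpoint, e0, e1, midpoint_eq_smul_add, invOf_eq_inv]
  norm_num

lemma coord_midpoint1 {P Q R : Pt} (hInd : AffineIndependent ℝ ![P,Q,R]) :
    (triBasis hInd).coord 1 (midpoint ℝ P Q) = 2⁻¹ := by
  have e0 : (triBasis hInd).coord 1 P = 0 := by
    have := (triBasis hInd).coord_apply (1:Fin 3) 0
    simpa using this
  have e1 : (triBasis hInd).coord 1 Q = 1 := by
    have := (triBasis hInd).coord_apply (1:Fin 3) 1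
    simpa using this
  rw [AffineMap.map_midpoint, e0, e1, midpoint_eq_smul_add, invOf_eq_inv]
  norm_num

lemma coord_midpoint2 {P Q R : Pt} (hInd : AffineIndependent ℝ ![P,Q,R]) :
    (triBasis hInd).coord 2 (midpoint ℝ P Q) = 0 := by
  have e0 : (triBasis hInd).coord 2 P = 0 := by
    have := (triBasis hInd).coord_apply (2:Fin 3) 0
    simpa using this
  have e1 : (triBasis hInd).coord 2 Q = 0 := by
    have := (triBasis hInd).coord_apply (2:Fin 3) 1
    simpa using this
  rw [AffineMap.map_midpoint, e0, e1, midpoint_eq_smul_add, invOf_eq_inv]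
  norm_num

/-- A point whose third barycentric coordinate vanishes lies on the line `P Q`. -/
lemma on_line {P Q R : Pt} (hInd : AffineIndependent ℝ ![P,Q,R]) {x : Pt}
    (hx : (triBasis hInd).coord 2 x = 0) :
    x = AffineMap.lineMap P Q ((triBasis hInd).coord 1 x) := by
  have h1 := rep3 hInd x
  have h2 := sum_coord hInd x
  rw [hx] at h1 h2
  rw [AffineMap.lineMap_apply_module]
  conv_lhs => rw [h1]
  rw [show (triBasis hInd).coord 0 x = 1 - (triBasis hInd).coord 1 x by linarith]
  module

lemma lineMap_comp {P Q : Pt} (t₁ t₂ σ : ℝ) :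
    AffineMap.lineMap (AffineMap.lineMap P Q t₁ : Pt) (AffineMap.lineMap P Q t₂ : Pt) σ
      = AffineMap.lineMap P Q ((1-σ)*t₁ + σ*t₂) := by
  simp only [AffineMap.lineMap_apply_module]
  module

/-- Starting at the midpoint of `PQ` and moving slightly towards a point with positive
third coordinate, we enter the interior of the triangle, while staying in a given
neighbourhood of the midpoint. -/
lemma near_interior {P Q R : Pt} (hInd : AffineIndependent ℝ ![P,Q,R]) {W : Pt}
    (hW : 0 < (triBasis hInd).coord 2 W) {U : Set Pt} (hU : IsOpen U)
    (hMU : midpoint ℝ P Q ∈ U) :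
    ∃ t ∈ Set.Ioo (0:ℝ) 1,
      AffineMap.lineMap (midpoint ℝ P Q) W t ∈ interior (convexHull ℝ {P,Q,R}) ∧
      AffineMap.lineMap (midpoint ℝ P Q) W t ∈ U := by
  set b := triBasis hInd with hb
  set M := midpoint ℝ P Q with hM
  have hcont : Continuous (fun t : ℝ => (AffineMap.lineMap M W t : Pt)) :=
    AffineMap.lineMap_continuous
  have h0 : Filter.Tendsto (fun t : ℝ => (AffineMap.lineMap M W t : Pt)) (nhds 0) (nhds M) := by
    have := hcont.tendsto 0
    rwa [show (AffineMap.lineMap M W (0:ℝ) : Pt) = M by simp] at this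
  have hc0 : ∀ᶠ t in nhds (0:ℝ), 0 < b.coord 0 (AffineMap.lineMap M W t) := by
    have hcc : Filter.Tendsto (fun t : ℝ => b.coord 0 (AffineMap.lineMap M W t)) (nhds 0)
        (nhds (b.coord 0 M)) := ((b.coord 0).continuous_of_finiteDimensional.tendsto M).comp h0
    apply hcc.eventually_const_lt
    rw [hM, hb, coord_midpoint0 hInd]
    norm_num
  have hc1 : ∀ᶠ t in nhds (0:ℝ), 0 < b.coord 1 (AffineMap.lineMap M W t) := by
    have hcc : Filter.Tendsto (fun t : ℝ => b.coord 1 (AffineMap.lineMap M W t)) (nhds 0)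
        (nhds (b.coord 1 M)) := ((b.coord 1).continuous_of_finiteDimensional.tendsto M).comp h0
    apply hcc.eventually_const_lt
    rw [hM, hb, coord_midpoint1 hInd]
    norm_num
  have hcU : ∀ᶠ t in nhds (0:ℝ), AffineMap.lineMap M W t ∈ U :=
    h0.eventually_mem (hU.mem_nhds hMU)
  have hIoo : ∀ᶠ t in nhdsWithin (0:ℝ) (Set.Ioi 0), t ∈ Set.Ioo (0:ℝ) 1 :=
    Ioo_mem_nhdsGT_of_mem ⟨le_refl _, zero_lt_one⟩
  obtain ⟨t, ht⟩ := ((((hc0.and hc1).and hcU).filter_mono nhdsWithin_le_nhds).and hIoo).exists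
  refine ⟨t, ht.2, ?_, ht.1.2⟩
  rw [mem_interior_hull_iff hInd]
  intro i
  fin_cases i
  · exact ht.1.1.1
  · exact ht.1.1.2
  · show 0 < b.coord 2 (AffineMap.lineMap M W t)
    have : b.coord 2 (AffineMap.lineMap M W t) =
        AffineMap.lineMap (b.coord 2 M) (b.coord 2 W) t := (b.coord 2).apply_lineMap M W t
    rw [this, hM, hb, coord_midpoint2 hInd, AffineMap.lineMap_apply_module]
    have hW' : 0 < (triBasis hInd).coord 2 W := hW
    simp only [smul_eq_mul]
    nlinarith [mul_pos ht.2.1 hW']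

lemma final_cases {𝒯 : Set EqTri} (hshare : NoSharedSide 𝒯) {T T' : EqTri}
    (hT : T ∈ 𝒯) (hT' : T' ∈ 𝒯) (hne : T' ≠ T) {P Q E₁ E₂ : Pt} (hPQ : P ≠ Q)
    (hedgeT : segment ℝ P Q ∈ T.edges) (hedge' : T'.IsEdge E₁ E₂)
    (hE : segment ℝ E₁ E₂ ∈ T'.edges) {t₁ t₂ θ : ℝ}
    (hE₁ : E₁ = AffineMap.lineMap P Q t₁) (hE₂ : E₂ = AffineMap.lineMap P Q t₂)
    (ht₁ : t₁ ∉ Set.Ioo (0:ℝ) 1) (ht₂ : t₂ ∉ Set.Ioo (0:ℝ) 1)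
    (hθ : θ ∈ Set.Ioo (0:ℝ) 1) (hcomb : (1-θ)*t₁ + θ*t₂ = 1/2)
    (hlt : t₁ < t₂) (hMopen : midpoint ℝ P Q ∈ openSegment ℝ P Q) :
    ContinuesAt 𝒯 T P Q ∨ ContinuesAt 𝒯 T Q P := by
  have hM_seg : midpoint ℝ P Q ∈ segment ℝ E₁ E₂ := by
    rw [segment_eq_image_lineMap]
    refine ⟨θ, ⟨hθ.1.le, hθ.2.le⟩, ?_⟩
    rw [hE₁, hE₂, lineMap_comp, hcomb, lineMap_one_half]
  have h12a : t₁ < 1/2 := by nlinarith [hθ.1, hθ.2, hlt]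
  have h12b : (1:ℝ)/2 < t₂ := by nlinarith [hθ.1, hθ.2, hlt]
  have ht₁0 : t₁ ≤ 0 := by
    by_contra hh
    push_neg at hh
    exact ht₁ ⟨hh, by linarith⟩
  have ht₂1 : 1 ≤ t₂ := by
    by_contra hh
    push_neg at hh
    exact ht₂ ⟨by linarith, hh⟩
  rcases lt_or_eq_of_le ht₁0 with h1 | h1
  · left
    refine ⟨T', hT', hne, E₁, E₂, hedge', ?_, midpoint ℝ P Q, hM_seg, hMopen⟩
    rw [openSegment_eq_image_lineMap]
    refine ⟨(-t₁)/(t₂ - t₁), ⟨div_pos (by linarith) (by linarith),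
      (div_lt_one (by linarith)).mpr (by linarith)⟩, ?_⟩
    rw [hE₁, hE₂, lineMap_comp,
      show (1 - (-t₁)/(t₂-t₁))*t₁ + ((-t₁)/(t₂-t₁))*t₂ = 0 by
        have hden : t₂ - t₁ ≠ 0 := ne_of_gt (by linarith)
        field_simp
        ring]
    simp
  · rcases eq_or_lt_of_le ht₂1 with h2 | h2
    · exfalso
      have hE₁P : E₁ = P := by rw [hE₁, h1]; simp
      have hE₂Q : E₂ = Q := by rw [hE₂, ← h2]; simp
      exact hshare T hT T' hT' hne.symm _ hedgeT _ hE (by rw [hE₁P, hE₂Q])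
    · right
      refine ⟨T', hT', hne, E₁, E₂, hedge', ?_, midpoint ℝ P Q, hM_seg,
        by rwa [openSegment_symm]⟩
      rw [openSegment_eq_image_lineMap]
      refine ⟨(1-t₁)/(t₂ - t₁), ⟨div_pos (by linarith) (by linarith),
        (div_lt_one (by linarith)).mpr (by linarith)⟩, ?_⟩
      rw [hE₁, hE₂, lineMap_comp,
        show (1 - (1-t₁)/(t₂-t₁))*t₁ + ((1-t₁)/(t₂-t₁))*t₂ = 1 by
          have hden : t₂ - t₁ ≠ 0 := ne_of_gt (by linarith)
          field_simp
          ring]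
      simp

lemma core {𝒯 : Set EqTri}
    (hdisj : ∀ T ∈ 𝒯, ∀ T' ∈ 𝒯, T ≠ T' → Disjoint (interior T.set) (interior T'.set))
    (hshare : NoSharedSide 𝒯) {T T' : EqTri} (hT : T ∈ 𝒯) (hT' : T' ∈ 𝒯) (hne : T' ≠ T)
    {P Q R : Pt} (hset : T.set = convexHull ℝ {P,Q,R}) (hInd : AffineIndependent ℝ ![P,Q,R])
    (hedgeT : segment ℝ P Q ∈ T.edges) (hnsub : ¬ Subdivided 𝒯 T P Q)
    {E₁ E₂ : Pt} (hedge' : T'.IsEdge E₁ E₂) (hE : segment ℝ E₁ E₂ ∈ T'.edges)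
    (hE12 : E₁ ≠ E₂) (hvert1 : E₁ ∈ T'.vertices) (hvert2 : E₂ ∈ T'.vertices)
    {a b : ℝ} (ha : 0 ≤ a) (hb : 0 ≤ b) (hab : a + b = 1)
    (hrep : midpoint ℝ P Q = a • E₁ + b • E₂)
    (hMT' : midpoint ℝ P Q ∈ T'.set) :
    ContinuesAt 𝒯 T P Q ∨ ContinuesAt 𝒯 T Q P := by
  classical
  have hPQ : P ≠ Q := by
    intro hh
    have : (0 : Fin 3) = 1 := hInd.injective (show ![P,Q,R] 0 = ![P,Q,R] 1 by simpa using hh)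
    exact absurd this (by decide)
  have hMopen : midpoint ℝ P Q ∈ openSegment ℝ P Q := by
    refine ⟨2⁻¹, 2⁻¹, by norm_num, by norm_num, by norm_num, ?_⟩
    rw [midpoint_eq_smul_add, invOf_eq_inv]
    exact (smul_add _ _ _).symm
  have hMne1 : midpoint ℝ P Q ≠ E₁ := fun hh => hnsub ⟨T', hT', hne, E₁, hvert1, hh ▸ hMopen⟩
  have hMne2 : midpoint ℝ P Q ≠ E₂ := fun hh => hnsub ⟨T', hT', hne, E₂, hvert2, hh ▸ hMopen⟩
  have hapos : 0 < a := by
    rcases lt_or_eq_of_le ha with hh | hh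
    · exact hh
    · exfalso
      apply hMne2
      rw [hrep, ← hh, show b = 1 by linarith]
      simp
  have hbpos : 0 < b := by
    rcases lt_or_eq_of_le hb with hh | hh
    · exact hh
    · exfalso
      apply hMne1
      rw [hrep, ← hh, show a = 1 by linarith]
      simp
  have hMlm : midpoint ℝ P Q = AffineMap.lineMap E₁ E₂ b := by
    rw [hrep, AffineMap.lineMap_apply_module, show a = 1 - b by linarith]
  have hE1T' : E₁ ∈ T'.set := subset_convexHull ℝ _ hvert1
  have hE2T' : E₂ ∈ T'.set := subset_convexHull ℝ _ hvert2
  have hnotpos : ∀ W : Pt, W ∈ T'.set → 0 < (triBasis hInd).coord 2 W → False := by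
    intro W hWT' hfW
    obtain ⟨t, htIoo, hmem, -⟩ := near_interior hInd hfW isOpen_univ (Set.mem_univ _)
    have hzT : AffineMap.lineMap (midpoint ℝ P Q) W t ∈ interior T.set := by
      rw [hset]; exact hmem
    have hzT' : AffineMap.lineMap (midpoint ℝ P Q) W t ∈ T'.set := by
      apply T'.convex.segment_subset hMT' hWT'
      rw [segment_eq_image_lineMap]
      exact ⟨t, ⟨htIoo.1.le, htIoo.2.le⟩, rfl⟩
    exact inter_interior_empty hdisj hT hT' hne.symm hzT' hzT
  have hcomb0 : (triBasis hInd).coord 2 (midpoint ℝ P Q)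
      = AffineMap.lineMap ((triBasis hInd).coord 2 E₁) ((triBasis hInd).coord 2 E₂) b := by
    conv_lhs => rw [hMlm]
    exact ((triBasis hInd).coord 2).apply_lineMap E₁ E₂ b
  rw [coord_midpoint2 hInd, AffineMap.lineMap_apply_module] at hcomb0
  simp only [smul_eq_mul] at hcomb0
  have hf1 : (triBasis hInd).coord 2 E₁ = 0 ∧ (triBasis hInd).coord 2 E₂ = 0 := by
    have h1 : ¬ 0 < (triBasis hInd).coord 2 E₁ := fun hh => hnotpos E₁ hE1T' hh
    have h2 : ¬ 0 < (triBasis hInd).coord 2 E₂ := fun hh => hnotpos E₂ hE2T' hh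
    push_neg at h1 h2
    have hb1 : (0:ℝ) < 1 - b := by linarith
    constructor
    · refine le_antisymm h1 ?_
      nlinarith [mul_nonpos_of_nonneg_of_nonpos hbpos.le h2]
    · refine le_antisymm h2 ?_
      nlinarith [mul_nonpos_of_nonneg_of_nonpos hb1.le h1]
  have hE₁lm : E₁ = AffineMap.lineMap P Q ((triBasis hInd).coord 1 E₁) := on_line hInd hf1.1
  have hE₂lm : E₂ = AffineMap.lineMap P Q ((triBasis hInd).coord 1 E₂) := on_line hInd hf1.2
  set t₁ := (triBasis hInd).coord 1 E₁ with ht₁def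
  set t₂ := (triBasis hInd).coord 1 E₂ with ht₂def
  have hcomb : (1-b)*t₁ + b*t₂ = 1/2 := by
    have h1 : AffineMap.lineMap P Q ((1-b)*t₁ + b*t₂) = AffineMap.lineMap P Q (1/2 : ℝ) := by
      rw [← lineMap_comp, ← hE₁lm, ← hE₂lm, ← hMlm, lineMap_one_half]
    exact AffineMap.lineMap_injective ℝ hPQ h1
  have hsubd : ∀ E : Pt, E ∈ T'.vertices → ∀ t : ℝ, E = AffineMap.lineMap P Q t →
      t ∉ Set.Ioo (0:ℝ) 1 := by
    intro E hEv t hElm htIoo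
    refine hnsub ⟨T', hT', hne, E, hEv, ?_⟩
    rw [hElm, openSegment_eq_image_lineMap]
    exact ⟨t, htIoo, rfl⟩
  have ht₁ := hsubd E₁ hvert1 t₁ hE₁lm
  have ht₂ := hsubd E₂ hvert2 t₂ hE₂lm
  have htne : t₁ ≠ t₂ := by
    intro hh
    exact hE12 (by rw [hE₁lm, hE₂lm, hh])
  rcases htne.lt_or_gt with hlt | hlt
  · exact final_cases hshare hT hT' hne hPQ hedgeT hedge' hE hE₁lm hE₂lm ht₁ ht₂
      (θ := b) ⟨hbpos, by linarith⟩ hcomb hlt hMopen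
  · refine final_cases hshare hT hT' hne hPQ hedgeT hedge'.symm ?_ hE₂lm hE₁lm ht₂ ht₁
      (θ := 1-b) ⟨by linarith, by linarith⟩ (by ring_nf; ring_nf at hcomb; linarith) hlt hMopen
    rw [segment_symm]
    exact hE

end Aux

/-- In `𝒯`, every uncut edge of a triangle continues at least at one of its endpoints. -/
theorem stmt_5 (𝒯 : Set EqTri) (h : GoodTiling 𝒯) :
    ∀ T ∈ 𝒯, ∀ P Q : Pt, T.IsEdge P Q → ¬ Subdivided 𝒯 T P Q →
      ContinuesAt 𝒯 T P Q ∨ ContinuesAt 𝒯 T Q P := by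
  classical
  intro T hT P Q hedge hnsub
  obtain ⟨⟨hdisj, hcover⟩, ⟨c, hc, hside⟩, hshare⟩ := h
  obtain ⟨R, hset, hInd, hedgeT⟩ := edge_data hedge
  obtain ⟨T', hT', hne, hMT'⟩ := exists_tri_contains hdisj hcover hc hside hT hset hInd
  have hMT'' : midpoint ℝ P Q ∈ convexHull ℝ {T'.A, T'.B, T'.C} := hMT'
  have hnonneg : ∀ i, 0 ≤ (triBasis T'.indep).coord i (midpoint ℝ P Q) :=
    (mem_hull_iff T'.indep _).mp hMT''
  have hsum := sum_coord T'.indep (midpoint ℝ P Q)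
  have hrep := rep3 T'.indep (midpoint ℝ P Q)
  have hzero : ∃ i, (triBasis T'.indep).coord i (midpoint ℝ P Q) = 0 := by
    by_contra hh
    push_neg at hh
    have hpos : ∀ i, 0 < (triBasis T'.indep).coord i (midpoint ℝ P Q) :=
      fun i => lt_of_le_of_ne (hnonneg i) (Ne.symm (hh i))
    have hint : midpoint ℝ P Q ∈ interior T'.set := by
      rw [EqTri.set, mem_interior_hull_iff T'.indep]
      exact hpos
    have hR : 0 < (triBasis hInd).coord 2 R := by
      have h22 := (triBasis hInd).coord_apply (2:Fin 3) 2
      simp at h22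
      rw [h22]
      norm_num
    obtain ⟨t, htIoo, hmem, hmemU⟩ := near_interior hInd hR isOpen_interior hint
    exact inter_interior_empty hdisj hT hT' hne.symm (interior_subset hmemU)
      (by rw [hset]; exact hmem)
  obtain ⟨i, hi⟩ := hzero
  have vertne : ∀ i j : Fin 3, i ≠ j → (![T'.A, T'.B, T'.C]) i ≠ (![T'.A, T'.B, T'.C]) j :=
    fun i j hij hh => hij (T'.indep.injective hh)
  fin_cases i
  · -- coordinate at `A` vanishes: M is on edge BC
    have hi' : (triBasis T'.indep).coord 0 (midpoint ℝ P Q) = 0 := hi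
    refine core hdisj hshare hT hT' hne hset hInd hedgeT hnsub
      (show T'.IsEdge T'.B T'.C from Or.inr (Or.inr (Or.inl ⟨rfl, rfl⟩)))
      (by right; left; rfl)
      (by simpa using vertne 1 2 (by decide))
      (by right; left; rfl) (by right; right; rfl)
      (hnonneg 1) (hnonneg 2) (by rw [hi'] at hsum; linarith) ?_ hMT'
    rw [hi'] at hrep
    simpa using hrep
  · have hi' : (triBasis T'.indep).coord 1 (midpoint ℝ P Q) = 0 := hi
    refine core hdisj hshare hT hT' hne hset hInd hedgeT hnsub
      (show T'.IsEdge T'.A T'.C from Or.inr (Or.inr (Or.inr (Or.inr (Or.inr ⟨rfl, rfl⟩)))))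
      (by right; right; rw [Set.mem_singleton_iff, segment_symm])
      (by simpa using vertne 0 2 (by decide))
      (by left; rfl) (by right; right; rfl)
      (hnonneg 0) (hnonneg 2) (by rw [hi'] at hsum; linarith) ?_ hMT'
    rw [hi'] at hrep
    simpa using hrep
  · have hi' : (triBasis T'.indep).coord 2 (midpoint ℝ P Q) = 0 := hi
    refine core hdisj hshare hT hT' hne hset hInd hedgeT hnsub
      (show T'.IsEdge T'.A T'.B from Or.inl ⟨rfl, rfl⟩)
      (by left; rfl)
      (by simpa using vertne 0 1 (by decide))
      (by left; rfl) (by right; left; rfl)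
      (hnonneg 0) (hnonneg 1) (by rw [hi'] at hsum; linarith) ?_ hMT'
    rw [hi'] at hrep
    simpa using hrep

end
end

section
/- In 𝒯, for any triangle of 𝒯 and any vertex A of that triangle, at most one of the two edges of the triangle meeting at A continues at A. -/
noncomputable section

/-- Two subsets of the plane are congruent if some isometry of the plane maps one
onto the other. -/
def Congruent' (s t : Set Pt) : Prop := ∃ f : Pt ≃ᵢ Pt, f '' s = t

section Aux

open Set

lemma range_triple_s6 (P Q C3 : Pt) : Set.range ![P, Q, C3] = ({P, Q, C3} : Set Pt) := by
  simp_rw [Matrix.range_cons, Matrix.range_empty, Set.singleton_union, insert_empty_eq]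

/-- A strictly positive affine combination of an affinely independent triple lies in the
interior of its convex hull. -/
lemma combo_mem_interior {P Q C3 : Pt} (hind : AffineIndependent ℝ ![P, Q, C3])
    {w0 w1 w2 : ℝ} (h0 : 0 < w0) (h1 : 0 < w1) (h2 : 0 < w2) (hsum : w0 + w1 + w2 = 1) :
    w0 • P + w1 • Q + w2 • C3 ∈ interior (convexHull ℝ ({P, Q, C3} : Set Pt)) := by
  have hspan : affineSpan ℝ (Set.range ![P, Q, C3]) = ⊤ := by
    rw [hind.affineSpan_eq_top_iff_card_eq_finrank_add_one]
    simp [finrank_euclideanSpace_fin]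
  let b : AffineBasis (Fin 3) ℝ Pt := ⟨![P, Q, C3], hind, hspan⟩
  have hbcoe : ⇑b = ![P, Q, C3] := rfl
  have hrange : Set.range ⇑b = ({P, Q, C3} : Set Pt) := by rw [hbcoe]; exact range_triple_s6 P Q C3
  rw [← hrange, b.interior_convexHull]
  set w : Fin 3 → ℝ := ![w0, w1, w2] with hw
  have hsum' : ∑ i, w i = 1 := by simp [hw, Fin.sum_univ_three]; linarith
  have hz : Finset.univ.affineCombination ℝ b w = w0 • P + w1 • Q + w2 • C3 := by
    rw [Finset.affineCombination_eq_linear_combination _ _ _ hsum', hbcoe, Fin.sum_univ_three]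
    simp [hw]
  intro i
  rw [← hz, b.coord_apply_combination_of_mem (Finset.mem_univ i) hsum']
  fin_cases i <;> simpa [hw]

end Aux
lemma crux {P Q C3 A : Pt} (hind : AffineIndependent ℝ ![P, Q, C3])
    (hA : A ∈ openSegment ℝ P Q) :
    ∃ ε0 : ℝ, 0 < ε0 ∧ ∀ ε s : ℝ, 0 < ε → ε < ε0 → |s| < ε0 →
      A + ε • (C3 - A) + s • (Q - P) ∈ interior (convexHull ℝ ({P, Q, C3} : Set Pt)) := by
  obtain ⟨x, y, hx, hy, hxy, hxyA⟩ := hA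
  refine ⟨min x y / 2, by positivity, fun ε s hε hεlt hslt => ?_⟩
  have hminx : min x y ≤ x := min_le_left _ _
  have hminy : min x y ≤ y := min_le_right _ _
  have hx1 : x < 1 := by linarith
  have habs1 : -|s| ≤ s := neg_abs_le s
  have habs2 : s ≤ |s| := le_abs_self s
  have hε2 : ε < 1 / 2 := by nlinarith
  have hw0 : 0 < (1 - ε) * x - s := by nlinarith
  have hw1 : 0 < (1 - ε) * y + s := by nlinarith
  have heq : A + ε • (C3 - A) + s • (Q - P)
      = ((1 - ε) * x - s) • P + ((1 - ε) * y + s) • Q + ε • C3 := by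
    rw [← hxyA]; module
  rw [heq]
  exact combo_mem_interior hind hw0 hw1 hε (by linear_combination (1 - ε) * hxy)
lemma edge_third {T : EqTri} {P Q : Pt} (h : T.IsEdge P Q) :
    ∃ C3 : Pt, ({P, Q, C3} : Set Pt) = {T.A, T.B, T.C} ∧ AffineIndependent ℝ ![P, Q, C3] := by
  have hnc : ¬ Collinear ℝ ({T.A, T.B, T.C} : Set Pt) :=
    affineIndependent_iff_not_collinear_set.mp T.indep
  rcases h with ⟨rfl, rfl⟩ | ⟨rfl, rfl⟩ | ⟨rfl, rfl⟩ | ⟨rfl, rfl⟩ | ⟨rfl, rfl⟩ | ⟨rfl, rfl⟩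
  · exact ⟨T.C, rfl, T.indep⟩
  · have hs : ({T.B, T.A, T.C} : Set Pt) = {T.A, T.B, T.C} := by ext z; simp only [Set.mem_insert_iff, Set.mem_singleton_iff]; tauto
    exact ⟨T.C, hs, affineIndependent_iff_not_collinear_set.mpr (hs ▸ hnc)⟩
  · have hs : ({T.B, T.C, T.A} : Set Pt) = {T.A, T.B, T.C} := by ext z; simp only [Set.mem_insert_iff, Set.mem_singleton_iff]; tauto
    exact ⟨T.A, hs, affineIndependent_iff_not_collinear_set.mpr (hs ▸ hnc)⟩
  · have hs : ({T.C, T.B, T.A} : Set Pt) = {T.A, T.B, T.C} := by ext z; simp only [Set.mem_insert_iff, Set.mem_singleton_iff]; tauto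
    exact ⟨T.A, hs, affineIndependent_iff_not_collinear_set.mpr (hs ▸ hnc)⟩
  · have hs : ({T.C, T.A, T.B} : Set Pt) = {T.A, T.B, T.C} := by ext z; simp only [Set.mem_insert_iff, Set.mem_singleton_iff]; tauto
    exact ⟨T.B, hs, affineIndependent_iff_not_collinear_set.mpr (hs ▸ hnc)⟩
  · have hs : ({T.A, T.C, T.B} : Set Pt) = {T.A, T.B, T.C} := by ext z; simp only [Set.mem_insert_iff, Set.mem_singleton_iff]; tauto
    exact ⟨T.B, hs, affineIndependent_iff_not_collinear_set.mpr (hs ▸ hnc)⟩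

lemma edge_pair_not_collinear {T : EqTri} {A Q R : Pt} (h1 : T.IsEdge A Q) (h2 : T.IsEdge A R)
    (hQR : Q ≠ R) : ¬ Collinear ℝ ({A, Q, R} : Set Pt) := by
  have hnc : ¬ Collinear ℝ ({T.A, T.B, T.C} : Set Pt) :=
    affineIndependent_iff_not_collinear_set.mp T.indep
  have hAB : T.A ≠ T.B := by
    have := T.indep.injective.ne (show (0 : Fin 3) ≠ 1 by decide); simpa using this
  have hBC : T.B ≠ T.C := by
    have := T.indep.injective.ne (show (1 : Fin 3) ≠ 2 by decide); simpa using this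
  have hAC : T.A ≠ T.C := by
    have := T.indep.injective.ne (show (0 : Fin 3) ≠ 2 by decide); simpa using this
  rcases h1 with ⟨rfl, rfl⟩ | ⟨rfl, rfl⟩ | ⟨rfl, rfl⟩ | ⟨rfl, rfl⟩ | ⟨rfl, rfl⟩ | ⟨rfl, rfl⟩ <;>
    rcases h2 with ⟨h2a, rfl⟩ | ⟨h2a, rfl⟩ | ⟨h2a, rfl⟩ | ⟨h2a, rfl⟩ | ⟨h2a, rfl⟩ | ⟨h2a, rfl⟩ <;>
    first
      | exact absurd h2a hAB
      | exact absurd h2a hAB.symm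
      | exact absurd h2a hBC
      | exact absurd h2a hBC.symm
      | exact absurd h2a hAC
      | exact absurd h2a hAC.symm
      | exact absurd rfl hQR
      | exact fun hc => hnc (hc.subset (by intro z hz; simp at hz ⊢; tauto))

lemma isEdge_share {T : EqTri} {P1 Q1 P2 Q2 : Pt} (h1 : T.IsEdge P1 Q1) (h2 : T.IsEdge P2 Q2) :
    P2 = P1 ∨ P2 = Q1 ∨ Q2 = P1 ∨ Q2 = Q1 := by
  rcases h1 with ⟨rfl, rfl⟩ | ⟨rfl, rfl⟩ | ⟨rfl, rfl⟩ | ⟨rfl, rfl⟩ | ⟨rfl, rfl⟩ | ⟨rfl, rfl⟩ <;>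
    rcases h2 with ⟨rfl, rfl⟩ | ⟨rfl, rfl⟩ | ⟨rfl, rfl⟩ | ⟨rfl, rfl⟩ | ⟨rfl, rfl⟩ | ⟨rfl, rfl⟩ <;>
      simp

lemma not_collinear_pair_indep {A Q R : Pt} (hnc : ¬ Collinear ℝ ({A, Q, R} : Set Pt)) :
    ∀ s t : ℝ, s • (Q - A) + t • (R - A) = 0 → s = 0 ∧ t = 0 := by
  have hAQ : A ≠ Q := by
    rintro rfl
    exact hnc (by
      have : ({A, A, R} : Set Pt) = {A, R} := by ext z; simp only [Set.mem_insert_iff, Set.mem_singleton_iff]; tauto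
      rw [this]; exact collinear_pair ℝ A R)
  intro s t hst
  by_cases ht : t = 0
  · subst ht
    refine ⟨?_, rfl⟩
    rw [zero_smul, add_zero, smul_eq_zero] at hst
    rcases hst with h | h
    · exact h
    · exact absurd (sub_eq_zero.mp h).symm hAQ
  · exfalso
    apply hnc
    rw [collinear_iff_exists_forall_eq_smul_vadd]
    refine ⟨A, Q - A, fun p hp => ?_⟩
    have h2 : t • (R - A) = -(s • (Q - A)) := eq_neg_of_add_eq_zero_right hst
    have h3 : R - A = (t⁻¹ * -s) • (Q - A) := by
      rw [mul_smul, neg_smul, ← h2, inv_smul_smul₀ ht]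
    have hR : R = (t⁻¹ * -s) • (Q - A) +ᵥ A := by
      simpa using sub_eq_iff_eq_add.mp h3
    rcases hp with rfl | rfl | rfl
    · exact ⟨0, by simp⟩
    · exact ⟨1, by simp⟩
    · exact ⟨t⁻¹ * -s, hR⟩

lemma dir_of_continue {P1 Q1 A Qv X : Pt} (hA : A ∈ openSegment ℝ P1 Q1)
    (hX : X ∈ segment ℝ P1 Q1) (hXo : X ∈ openSegment ℝ A Qv) (hAQ : A ≠ Qv) :
    ∃ t : ℝ, t ≠ 0 ∧ Qv - A = t • (Q1 - P1) := by
  obtain ⟨a1, a2, ha1, ha2, has, haA⟩ := hA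
  obtain ⟨m1, m2, hm1, hm2, hms, hmX⟩ := hX
  obtain ⟨c1, c2, hc1, hc2, hcs, hcX⟩ := hXo
  obtain rfl : a1 = 1 - a2 := by linarith
  obtain rfl : m1 = 1 - m2 := by linarith
  obtain rfl : c1 = 1 - c2 := by linarith
  have h1 : X - A = (m2 - a2) • (Q1 - P1) := by rw [← haA, ← hmX]; module
  have h2 : X - A = c2 • (Qv - A) := by rw [← hcX]; module
  have h3 : Qv - A = (c2⁻¹ * (m2 - a2)) • (Q1 - P1) := by
    rw [mul_smul, ← h1, h2, inv_smul_smul₀ (ne_of_gt hc2)]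
  refine ⟨c2⁻¹ * (m2 - a2), fun h0 => hAQ ?_, h3⟩
  rw [h0, zero_smul, sub_eq_zero] at h3
  exact h3.symm

/-- In `𝒯`, at most one of the two edges of a triangle meeting at a vertex `A`
continues at `A`. -/
theorem stmt_6 (𝒯 : Set EqTri) (h : GoodTiling 𝒯) :
    ∀ T ∈ 𝒯, ∀ A Q R : Pt, T.IsEdge A Q → T.IsEdge A R → Q ≠ R →
      ¬ (ContinuesAt 𝒯 T A Q ∧ ContinuesAt 𝒯 T A R) := by
  rintro T hT A Q R hEQ hER hQR ⟨⟨T1, hT1, hT1ne, P1, Q1, hE1, hA1, X1, hX1seg, hX1open⟩,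
    ⟨T2, hT2, hT2ne, P2, Q2, hE2, hA2, X2, hX2seg, hX2open⟩⟩
  have hnc : ¬ Collinear ℝ ({A, Q, R} : Set Pt) := edge_pair_not_collinear hEQ hER hQR
  have hAQ : A ≠ Q := by
    rintro rfl
    exact hnc (by
      have : ({A, A, R} : Set Pt) = {A, R} := by
        ext z; simp only [Set.mem_insert_iff, Set.mem_singleton_iff]; tauto
      rw [this]; exact collinear_pair ℝ A R)
  have hAR : A ≠ R := by
    rintro rfl
    exact hnc (by
      have : ({A, Q, A} : Set Pt) = {A, Q} := by
        ext z; simp only [Set.mem_insert_iff, Set.mem_singleton_iff]; tauto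
      rw [this]; exact collinear_pair ℝ A Q)
  have hlin := not_collinear_pair_indep hnc
  obtain ⟨t1, ht1, hQdir⟩ := dir_of_continue hA1 hX1seg hX1open hAQ
  obtain ⟨t2, ht2, hRdir⟩ := dir_of_continue hA2 hX2seg hX2open hAR
  -- linear independence of the two edge directions
  have hliuv : ∀ s t : ℝ, s • (Q1 - P1) + t • (Q2 - P2) = 0 → s = 0 ∧ t = 0 := by
    intro s t hst
    have hu : (Q1 - P1) = t1⁻¹ • (Q - A) := by rw [hQdir, inv_smul_smul₀ ht1]
    have hv : (Q2 - P2) = t2⁻¹ • (R - A) := by rw [hRdir, inv_smul_smul₀ ht2]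
    have h0 : (s * t1⁻¹) • (Q - A) + (t * t2⁻¹) • (R - A) = 0 := by
      rw [mul_smul, mul_smul, ← hu, ← hv]; exact hst
    obtain ⟨hs0, ht0⟩ := hlin _ _ h0
    constructor
    · rcases mul_eq_zero.mp hs0 with h' | h'
      · exact h'
      · exact absurd h' (inv_ne_zero ht1)
    · rcases mul_eq_zero.mp ht0 with h' | h'
      · exact h'
      · exact absurd h' (inv_ne_zero ht2)
  -- endpoint relations for the two edges through A
  obtain ⟨x1', x1, hx1', hx1, hxs, hxA⟩ := id hA1
  obtain ⟨x2', x2, hx2', hx2, hys, hyA⟩ := id hA2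
  obtain rfl : x1' = 1 - x1 := by linarith
  obtain rfl : x2' = 1 - x2 := by linarith
  have hP1 : P1 - A = (-x1) • (Q1 - P1) := by rw [← hxA]; module
  have hQ1v : Q1 - A = (1 - x1) • (Q1 - P1) := by rw [← hxA]; module
  have hP2 : P2 - A = (-x2) • (Q2 - P2) := by rw [← hyA]; module
  have hQ2v : Q2 - A = (1 - x2) • (Q2 - P2) := by rw [← hyA]; module
  by_cases hT12 : T1 = T2
  · -- same triangle: the two edges would share a vertex, distinct from A; contradiction
    subst hT12
    have hP2' : x2 • (Q2 - P2) = -(P2 - A) := by rw [hP2]; module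
    have hQ2' : (-(1 - x2)) • (Q2 - P2) = -(Q2 - A) := by rw [hQ2v]; module
    rcases isEdge_share hE1 hE2 with e | e | e | e
    · have h0 : (-x1) • (Q1 - P1) + x2 • (Q2 - P2) = 0 := by
        rw [← hP1, hP2', e]; module
      have := (hliuv _ _ h0).1
      rw [neg_eq_zero] at this; linarith
    · have h0 : (1 - x1) • (Q1 - P1) + x2 • (Q2 - P2) = 0 := by
        rw [← hQ1v, hP2', e]; module
      have := (hliuv _ _ h0).1
      linarith
    · have h0 : (-x1) • (Q1 - P1) + (-(1 - x2)) • (Q2 - P2) = 0 := by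
        rw [← hP1, hQ2', e]; module
      have := (hliuv _ _ h0).1
      rw [neg_eq_zero] at this; linarith
    · have h0 : (1 - x1) • (Q1 - P1) + (-(1 - x2)) • (Q2 - P2) = 0 := by
        rw [← hQ1v, hQ2', e]; module
      have := (hliuv _ _ h0).1
      linarith
  · -- distinct triangles: their interiors meet near A, contradiction
    have hli : LinearIndependent ℝ ![Q1 - P1, Q2 - P2] := LinearIndependent.pair_iff.mpr hliuv
    have hspan : Submodule.span ℝ ({Q1 - P1, Q2 - P2} : Set Pt) = ⊤ := by
      have hs := hli.span_eq_top_of_card_eq_finrank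
        (by simp [finrank_euclideanSpace_fin])
      rwa [show Set.range ![Q1 - P1, Q2 - P2] = ({Q1 - P1, Q2 - P2} : Set Pt) from by
        simp_rw [Matrix.range_cons, Matrix.range_empty, Set.singleton_union,
          insert_empty_eq]] at hs
    obtain ⟨C1, hset1, hind1⟩ := edge_third hE1
    obtain ⟨C2, hset2, hind2⟩ := edge_third hE2
    obtain ⟨a1, b1, hC1⟩ := Submodule.mem_span_pair.mp
      (show C1 - A ∈ Submodule.span ℝ ({Q1 - P1, Q2 - P2} : Set Pt) by rw [hspan]; trivial)
    obtain ⟨a2, b2, hC2⟩ := Submodule.mem_span_pair.mp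
      (show C2 - A ∈ Submodule.span ℝ ({Q1 - P1, Q2 - P2} : Set Pt) by rw [hspan]; trivial)
    have hb1 : b1 ≠ 0 := by
      rintro rfl
      apply affineIndependent_iff_not_collinear_set.mp hind1
      rw [collinear_iff_exists_forall_eq_smul_vadd]
      refine ⟨A, Q1 - P1, ?_⟩
      have hc3 : C1 = a1 • (Q1 - P1) +ᵥ A := by
        have h' : C1 - A = a1 • (Q1 - P1) := by rw [← hC1]; module
        simpa using sub_eq_iff_eq_add.mp h'
      intro p hp
      rcases hp with rfl | rfl | rfl
      · exact ⟨-x1, by simpa using sub_eq_iff_eq_add.mp hP1⟩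
      · exact ⟨1 - x1, by simpa using sub_eq_iff_eq_add.mp hQ1v⟩
      · exact ⟨a1, hc3⟩
    have ha2 : a2 ≠ 0 := by
      rintro rfl
      apply affineIndependent_iff_not_collinear_set.mp hind2
      rw [collinear_iff_exists_forall_eq_smul_vadd]
      refine ⟨A, Q2 - P2, ?_⟩
      have hc3 : C2 = b2 • (Q2 - P2) +ᵥ A := by
        have h' : C2 - A = b2 • (Q2 - P2) := by rw [← hC2]; module
        simpa using sub_eq_iff_eq_add.mp h'
      intro p hp
      rcases hp with rfl | rfl | rfl
      · exact ⟨-x2, by simpa using sub_eq_iff_eq_add.mp hP2⟩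
      · exact ⟨1 - x2, by simpa using sub_eq_iff_eq_add.mp hQ2v⟩
      · exact ⟨b2, hc3⟩
    obtain ⟨e1, he1, hmem1⟩ := crux hind1 hA1
    obtain ⟨e2, he2, hmem2⟩ := crux hind2 hA2
    obtain ⟨M, hMdef⟩ : ∃ M : ℝ, M = 1 + |a1| + |a2| + |b1| + |b2| := ⟨_, rfl⟩
    have hna1 := abs_nonneg a1
    have hna2 := abs_nonneg a2
    have hnb1 := abs_nonneg b1
    have hnb2 := abs_nonneg b2
    have hMpos : 0 < M := by rw [hMdef]; positivity
    have hM1 : 1 ≤ M := by rw [hMdef]; linarith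
    obtain ⟨ε, hεdef⟩ : ∃ ε : ℝ, ε = min e1 e2 / (2 * M) := ⟨_, rfl⟩
    have hminpos : 0 < min e1 e2 := lt_min he1 he2
    have hmin1 : min e1 e2 ≤ e1 := min_le_left _ _
    have hmin2 : min e1 e2 ≤ e2 := min_le_right _ _
    have hεpos : 0 < ε := by rw [hεdef]; positivity
    have hεM : ε * (2 * M) = min e1 e2 := by
      rw [hεdef]; field_simp
    have hdub : ε * 2 ≤ ε * (2 * M) :=
      mul_le_mul_of_nonneg_left (by linarith : (2:ℝ) ≤ 2 * M) (le_of_lt hεpos)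
    have hεe1 : ε < e1 := by linarith
    have hεe2 : ε < e2 := by linarith
    have hs1 : |ε * (a2 - a1)| < e1 := by
      have h1 : |a2 - a1| ≤ |a2| + |a1| := abs_sub a2 a1
      have h2 : |ε * (a2 - a1)| = ε * |a2 - a1| := by
        rw [abs_mul, abs_of_pos hεpos]
      have key1 : |a2| + |a1| ≤ 2 * M - 1 := by rw [hMdef]; linarith
      have hmul1 : ε * (|a2| + |a1|) ≤ ε * (2 * M - 1) :=
        mul_le_mul_of_nonneg_left key1 (le_of_lt hεpos)
      have hring : ε * (2 * M - 1) = ε * (2 * M) - ε := by ring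
      have hstep : ε * |a2 - a1| ≤ ε * (|a2| + |a1|) :=
        mul_le_mul_of_nonneg_left h1 (le_of_lt hεpos)
      rw [h2]; linarith
    have hs2 : |ε * (b1 - b2)| < e2 := by
      have h1 : |b1 - b2| ≤ |b1| + |b2| := abs_sub b1 b2
      have h2 : |ε * (b1 - b2)| = ε * |b1 - b2| := by
        rw [abs_mul, abs_of_pos hεpos]
      have key1 : |b1| + |b2| ≤ 2 * M - 1 := by rw [hMdef]; linarith
      have hmul1 : ε * (|b1| + |b2|) ≤ ε * (2 * M - 1) :=
        mul_le_mul_of_nonneg_left key1 (le_of_lt hεpos)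
      have hring : ε * (2 * M - 1) = ε * (2 * M) - ε := by ring
      have hstep : ε * |b1 - b2| ≤ ε * (|b1| + |b2|) :=
        mul_le_mul_of_nonneg_left h1 (le_of_lt hεpos)
      rw [h2]; linarith
    have hz1 := hmem1 ε (ε * (a2 - a1)) hεpos hεe1 hs1
    have hz2 := hmem2 ε (ε * (b1 - b2)) hεpos hεe2 hs2
    obtain ⟨z, hzdef⟩ : ∃ z : Pt, z = A + (ε * a2) • (Q1 - P1) + (ε * b1) • (Q2 - P2) :=
      ⟨_, rfl⟩
    have hzz1 : A + ε • (C1 - A) + (ε * (a2 - a1)) • (Q1 - P1) = z := by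
      rw [hzdef, ← hC1]; module
    have hzz2 : A + ε • (C2 - A) + (ε * (b1 - b2)) • (Q2 - P2) = z := by
      rw [hzdef, ← hC2]; module
    rw [hzz1] at hz1
    rw [hzz2] at hz2
    have hzT1 : z ∈ interior T1.set := by
      show z ∈ interior (convexHull ℝ ({T1.A, T1.B, T1.C} : Set Pt))
      rw [← hset1]; exact hz1
    have hzT2 : z ∈ interior T2.set := by
      show z ∈ interior (convexHull ℝ ({T2.A, T2.B, T2.C} : Set Pt))
      rw [← hset2]; exact hz2
    exact Set.disjoint_left.mp (h.1.1 T1 hT1 T2 hT2 hT12) hzT1 hzT2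

end
end
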